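/- arXiv:1907.07119 — 7 statements merged into one kernel-verified Lean document; each statement's English description precedes it below -/
import Mathlib

section
/- Let d, n, M ∈ ℕ with N = n+1 and nodes t_1,...,t_M ∈ [0,1)^d, z_j = e^{2πi t_j} ∈ T^d componentwise. Let A ∈ C^{M × N^d} be the Vandermonde matrix with entries z_j^α for multi-indices α with ‖α‖_∞ ≤ n. Suppose that for every unit vector v ∈ C^M there exist ε ∈ C^M with ‖ε‖_2 ≤ c < 1 and a trigonometric polynomial f of max-degree at most n in d variables with f(t_j) = v_j + ε_j for all j. Then ‖A* v‖_2 ≥ (1 - ‖ε‖_2)·‖f‖_{L²(T^d)}^{-1}, and consequently the smallest singular value of A satisfies σ_min(A) ≥ (1-c)/sup_f ‖f‖_{L²}. -/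
open Real Matrix MeasureTheory

/-- Wrap-around distance on the torus. -/
noncomputable def wrap (x : ℝ) : ℝ := ⨅ r : ℤ, |x + (r : ℝ)|

/-- Modified Dirichlet kernel. -/
noncomputable def dirich (m : ℕ) (t : ℝ) : ℂ :=
  ((m : ℂ) + 1)⁻¹ * ∑ k ∈ Finset.range (m + 1), Complex.exp (2 * Real.pi * Complex.I * k * t)
lemma cs_aux {ι : Type*} [Fintype ι] (x y : ι → ℂ) :
    ‖∑ i, (starRingEnd ℂ) (x i) * y i‖
      ≤ Real.sqrt (∑ i, ‖x i‖ ^ 2) * Real.sqrt (∑ i, ‖y i‖ ^ 2) := by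
  have h := norm_inner_le_norm (𝕜 := ℂ)
    ((WithLp.equiv 2 (ι → ℂ)).symm x) ((WithLp.equiv 2 (ι → ℂ)).symm y)
  simpa [PiLp.inner_apply, RCLike.inner_apply, EuclideanSpace.norm_eq, mul_comm] using h

private lemma key_ineq (d n M : ℕ) (t : Fin M → Fin d → ℝ) (c : ℝ) (hc : c < 1)
    (A : Matrix (Fin M) (Fin d → Fin (n + 1)) ℂ)
    (hA : ∀ j α, A j α
      = Complex.exp (2 * π * Complex.I * ((∑ ℓ, ((α ℓ : ℕ) : ℝ) * t j ℓ : ℝ) : ℂ)))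
    (v ε : Fin M → ℂ) (g : (Fin d → Fin (n + 1)) → ℂ)
    (hv : (∑ j, ‖v j‖ ^ 2) = 1)
    (hε : Real.sqrt (∑ j, ‖ε j‖ ^ 2) ≤ c)
    (hfg : ∀ j, (∑ α, g α * Complex.exp (2 * π * Complex.I
          * ((∑ ℓ, ((α ℓ : ℕ) : ℝ) * t j ℓ : ℝ) : ℂ))) = v j + ε j) :
    Real.sqrt (∑ α, ‖Aᴴ.mulVec v α‖ ^ 2)
        ≥ (1 - Real.sqrt (∑ j, ‖ε j‖ ^ 2)) * (Real.sqrt (∑ α, ‖g α‖ ^ 2))⁻¹ := by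
  set E := Real.sqrt (∑ j, ‖ε j‖ ^ 2) with hE
  set G := Real.sqrt (∑ α, ‖g α‖ ^ 2) with hG
  set X := Real.sqrt (∑ α, ‖Aᴴ.mulVec v α‖ ^ 2) with hX
  rcases eq_or_lt_of_le (Real.sqrt_nonneg (∑ α, ‖g α‖ ^ 2)) with h0 | hGpos
  · rw [← hG] at h0
    rw [← h0, _root_.inv_zero, mul_zero]
    exact Real.sqrt_nonneg _
  -- the key identity
  have hS : ∑ α, (starRingEnd ℂ) (Aᴴ.mulVec v α) * g α
      = ∑ j, (starRingEnd ℂ) (v j) * (v j + ε j) := by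
    have : ∀ α, (starRingEnd ℂ) (Aᴴ.mulVec v α) * g α
        = ∑ j, (starRingEnd ℂ) (v j) * (g α * A j α) := by
      intro α
      simp only [Matrix.mulVec, Matrix.conjTranspose_apply, dotProduct, map_sum,
        Finset.sum_mul]
      refine Finset.sum_congr rfl fun j _ => ?_
      rw [show star (A j α) = (starRingEnd ℂ) (A j α) from rfl, _root_.map_mul,
        Complex.conj_conj]
      ring
    rw [Finset.sum_congr rfl fun α _ => this α, Finset.sum_comm]
    refine Finset.sum_congr rfl fun j _ => ?_
    rw [← Finset.mul_sum]
    congr 1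
    rw [← hfg j]
    exact Finset.sum_congr rfl fun α _ => by rw [hA]
  have hS2 : ∑ j, (starRingEnd ℂ) (v j) * (v j + ε j)
      = 1 + ∑ j, (starRingEnd ℂ) (v j) * ε j := by
    simp only [mul_add, Finset.sum_add_distrib]
    congr 1
    have : ∀ j, (starRingEnd ℂ) (v j) * v j = ((‖v j‖ ^ 2 : ℝ) : ℂ) := by
      intro j
      rw [mul_comm, Complex.mul_conj']
      norm_cast
    rw [Finset.sum_congr rfl fun j _ => this j]
    exact_mod_cast hv
  -- Cauchy-Schwarz bounds
  have cs1 : ‖∑ α, (starRingEnd ℂ) (Aᴴ.mulVec v α) * g α‖ ≤ X * G := cs_aux _ _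
  have cs2 : ‖∑ j, (starRingEnd ℂ) (v j) * ε j‖ ≤ E := by
    have := cs_aux v ε
    rwa [hv, Real.sqrt_one, one_mul] at this
  have hlow : 1 - E ≤ ‖∑ j, (starRingEnd ℂ) (v j) * (v j + ε j)‖ := by
    rw [hS2]
    calc 1 - E ≤ ‖(1 : ℂ)‖ - ‖∑ j, (starRingEnd ℂ) (v j) * ε j‖ := by
          simp only [norm_one]; linarith
      _ ≤ ‖(1 : ℂ) + ∑ j, (starRingEnd ℂ) (v j) * ε j‖ := by
          have := norm_sub_le ((1 : ℂ) + ∑ j, (starRingEnd ℂ) (v j) * ε j)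
            (∑ j, (starRingEnd ℂ) (v j) * ε j)
          simp only [add_sub_cancel_right] at this
          have h2 := norm_sub_norm_le ((1 : ℂ) + ∑ j, (starRingEnd ℂ) (v j) * ε j)
            (∑ j, (starRingEnd ℂ) (v j) * ε j)
          linarith [abs_norm ((1:ℂ))]
  rw [hS] at cs1
  have : 1 - E ≤ X * G := le_trans hlow cs1
  rw [ge_iff_le, ← div_eq_mul_inv, div_le_iff₀ hGpos]
  linarith

theorem stmt2 (d n M : ℕ) (hd : 0 < d) (hM : 0 < M) (t : Fin M → Fin d → ℝ)
    (ht : ∀ j ℓ, t j ℓ ∈ Set.Ico (0:ℝ) 1) (c : ℝ) (hc : c < 1)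
    (A : Matrix (Fin M) (Fin d → Fin (n + 1)) ℂ)
    (hA : ∀ j α, A j α
      = Complex.exp (2 * π * Complex.I * ((∑ ℓ, ((α ℓ : ℕ) : ℝ) * t j ℓ : ℝ) : ℂ))) :
    (∀ (v ε : Fin M → ℂ) (g : (Fin d → Fin (n + 1)) → ℂ),
      (∑ j, ‖v j‖ ^ 2) = 1 →
      Real.sqrt (∑ j, ‖ε j‖ ^ 2) ≤ c →
      (∀ j, (∑ α, g α * Complex.exp (2 * π * Complex.I
          * ((∑ ℓ, ((α ℓ : ℕ) : ℝ) * t j ℓ : ℝ) : ℂ))) = v j + ε j) →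
      Real.sqrt (∑ α, ‖Aᴴ.mulVec v α‖ ^ 2)
        ≥ (1 - Real.sqrt (∑ j, ‖ε j‖ ^ 2)) * (Real.sqrt (∑ α, ‖g α‖ ^ 2))⁻¹) ∧
    (∀ B : ℝ, 0 < B →
      (∀ v : Fin M → ℂ, (∑ j, ‖v j‖ ^ 2) = 1 →
        ∃ (ε : Fin M → ℂ) (g : (Fin d → Fin (n + 1)) → ℂ),
          Real.sqrt (∑ j, ‖ε j‖ ^ 2) ≤ c ∧
          (∀ j, (∑ α, g α * Complex.exp (2 * π * Complex.I
              * ((∑ ℓ, ((α ℓ : ℕ) : ℝ) * t j ℓ : ℝ) : ℂ))) = v j + ε j) ∧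
          Real.sqrt (∑ α, ‖g α‖ ^ 2) ≤ B) →
      ∀ v : Fin M → ℂ, (∑ j, ‖v j‖ ^ 2) = 1 →
        Real.sqrt (∑ α, ‖Aᴴ.mulVec v α‖ ^ 2) ≥ (1 - c) / B) := by
  constructor
  · exact fun v ε g hv hε hfg => key_ineq d n M t c hc A hA v ε g hv hε hfg
  · intro B hB hcov v hv
    obtain ⟨ε, g, hε, hfg, hgB⟩ := hcov v hv
    have key := key_ineq d n M t c hc A hA v ε g hv hε hfg
    set E := Real.sqrt (∑ j, ‖ε j‖ ^ 2) with hE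
    set G := Real.sqrt (∑ α, ‖g α‖ ^ 2) with hG
    have hGpos : 0 < G := by
      rcases eq_or_lt_of_le (Real.sqrt_nonneg (∑ α, ‖g α‖ ^ 2)) with h0 | h
      · exfalso
        have hsum : (∑ α, ‖g α‖ ^ 2) = 0 := by
          by_contra hne
          have hpos : 0 < ∑ α, ‖g α‖ ^ 2 :=
            lt_of_le_of_ne (Finset.sum_nonneg fun α _ => sq_nonneg _) (Ne.symm hne)
          have := Real.sqrt_pos.mpr hpos
          rw [← h0] at this
          exact lt_irrefl 0 this
        have hg0 : ∀ α, g α = 0 := by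
          intro α
          have h1 := (Finset.sum_eq_zero_iff_of_nonneg
            (fun α _ => sq_nonneg ‖g α‖)).mp hsum α (Finset.mem_univ α)
          have : ‖g α‖ = 0 := by nlinarith [norm_nonneg (g α)]
          exact norm_eq_zero.mp this
        have hεv : ∀ j, ε j = -v j := by
          intro j
          have := hfg j
          simp only [hg0, zero_mul, Finset.sum_const_zero] at this
          linear_combination -this
        have hE1 : E = 1 := by
          rw [hE]
          have : (∑ j, ‖ε j‖ ^ 2) = 1 := by
            rw [← hv]
            exact Finset.sum_congr rfl fun j _ => by rw [hεv j, norm_neg]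
          rw [this, Real.sqrt_one]
        rw [hE1] at hε
        linarith
      · exact h
    have hE1 : E < 1 := lt_of_le_of_lt hε hc
    have h1 : (1 - c) / B ≤ (1 - E) / G :=
      div_le_div₀ (by linarith) (by linarith) hGpos hgB
    rw [div_eq_mul_inv] at h1
    exact le_trans h1 key
end

section
/- For m ∈ ℕ with m ≥ 2, the squared L² norm of the square of the modified Dirichlet kernel satisfies ‖d_m²‖_{L²(T)}² = (1/(m+1))·(2/3 + 1/(3(m+1)²)) ≤ (1/(m+1))·(1/√2). -/
open Real Matrix MeasureTheory

lemma int_exp (n : ℤ) : ∫ t in (0:ℝ)..1, Complex.exp (2 * Real.pi * Complex.I * n * t)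
    = if n = 0 then 1 else 0 := by
  by_cases h : n = 0
  · simp [h]
  · have hc : (2 * (Real.pi:ℂ) * Complex.I * n) ≠ 0 := by
      simp [Real.pi_ne_zero, Complex.I_ne_zero, h, Complex.ofReal_ne_zero]
    rw [if_neg h]
    have h2 := integral_exp_mul_complex (a := 0) (b := 1) hc
    simp only [Complex.ofReal_one, Complex.ofReal_zero, mul_one, mul_zero, Complex.exp_zero] at h2
    rw [show (fun t : ℝ => Complex.exp (2 * Real.pi * Complex.I * n * t))
        = fun t : ℝ => Complex.exp ((2 * (Real.pi:ℂ) * Complex.I * n) * t) from rfl] at *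
    rw [h2, show 2 * (Real.pi:ℂ) * Complex.I * n = n * (2*Real.pi*Complex.I) by ring,
      Complex.exp_int_mul_two_pi_mul_I]
    simp

lemma fiber_card (m s : ℕ) (hs : s ≤ 2*m) :
    ((Finset.range (m+1) ×ˢ Finset.range (m+1)).filter (fun y => y.1 + y.2 = s)).card
      = min s (2*m - s) + 1 := by
  have himg : (Finset.range (m+1) ×ˢ Finset.range (m+1)).filter (fun y => y.1 + y.2 = s)
      = (Finset.Icc (s - m) (min s m)).image (fun a => (a, s - a)) := by
    ext ⟨c, d⟩
    simp only [Finset.mem_filter, Finset.mem_product, Finset.mem_range, Finset.mem_image,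
      Finset.mem_Icc, Prod.mk.injEq]
    constructor
    · rintro ⟨⟨h1, h2⟩, h3⟩
      exact ⟨c, by omega, rfl, by omega⟩
    · rintro ⟨a, ⟨ha1, ha2⟩, rfl, rfl⟩
      omega
  rw [himg, Finset.card_image_of_injOn (fun a _ b _ h => (Prod.mk.injEq _ _ _ _ ▸ h).1),
    Nat.card_Icc]
  omega

lemma sq_sum (n : ℕ) : 6 * ∑ i ∈ Finset.range n, (i+1)^2 = n*(n+1)*(2*n+1) := by
  induction n with
  | zero => simp
  | succ n ih => rw [Finset.sum_range_succ, Nat.mul_add, ih]; ring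

lemma big_sum (m : ℕ) : 6 * ∑ s ∈ Finset.range (2*m+1), (min s (2*m - s) + 1)^2
    = m*(m+1)*(2*m+1) + (m+1)*(m+2)*(2*m+3) := by
  have hsplit : (2*m+1) = m + (m+1) := by omega
  rw [hsplit, Finset.sum_range_add]
  have h1 : ∀ s ∈ Finset.range m, (min s (2*m - s) + 1)^2 = (s+1)^2 := by
    intro s hs; rw [Finset.mem_range] at hs; congr 2; omega
  have h2 : ∀ i ∈ Finset.range (m+1), (min (m+i) (2*m - (m+i)) + 1)^2 = (m - i + 1)^2 := by
    intro i hi; rw [Finset.mem_range] at hi; congr 2; omega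
  rw [Finset.sum_congr rfl h1, Finset.sum_congr rfl h2, Nat.mul_add, sq_sum]
  have h3 : ∑ i ∈ Finset.range (m+1), (m - i + 1)^2 = ∑ i ∈ Finset.range (m+1), (i+1)^2 := by
    rw [← Finset.sum_range_reflect]
    exact Finset.sum_congr rfl fun i hi => by rw [Finset.mem_range] at hi; congr 2; omega
  rw [h3, sq_sum]; ring

lemma expand4 (R : Finset ℕ) (f g : ℕ → ℂ) :
    (∑ k ∈ R, f k)^2 * (∑ k ∈ R, g k)^2
      = ∑ a ∈ R, ∑ b ∈ R, ∑ c ∈ R, ∑ d ∈ R, f a * f b * (g c * g d) := by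
  rw [sq, sq, Finset.sum_mul_sum, Finset.sum_mul_sum, Finset.sum_mul]
  refine Finset.sum_congr rfl fun a _ => ?_
  rw [Finset.sum_mul]
  refine Finset.sum_congr rfl fun b _ => ?_
  rw [Finset.mul_sum]
  refine Finset.sum_congr rfl fun c _ => ?_
  rw [Finset.mul_sum]

lemma prod_exp (a b c d : ℕ) (t : ℝ) :
    Complex.exp (2*Real.pi*Complex.I*a*t) * Complex.exp (2*Real.pi*Complex.I*b*t) *
    ((starRingEnd ℂ) (Complex.exp (2*Real.pi*Complex.I*c*t)) *
      (starRingEnd ℂ) (Complex.exp (2*Real.pi*Complex.I*d*t)))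
    = Complex.exp (2*Real.pi*Complex.I*((((a:ℤ)+b-c-d : ℤ):ℂ))*t) := by
  rw [← Complex.exp_conj, ← Complex.exp_conj, ← Complex.exp_add, ← Complex.exp_add,
    ← Complex.exp_add]
  congr 1
  simp only [_root_.map_mul, Complex.conj_I, Complex.conj_ofReal, map_natCast, map_ofNat]
  push_cast
  ring

lemma hF (m : ℕ) (t : ℝ) :
    (dirich m t)^2 * (starRingEnd ℂ) ((dirich m t)^2)
      = ((m:ℂ)+1)⁻¹^4 * ∑ a ∈ Finset.range (m+1), ∑ b ∈ Finset.range (m+1),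
          ∑ c ∈ Finset.range (m+1), ∑ d ∈ Finset.range (m+1),
            Complex.exp (2*Real.pi*Complex.I*((((a:ℤ)+b-c-d : ℤ):ℂ))*t) := by
  unfold dirich
  have hc : (starRingEnd ℂ) (((m:ℂ)+1)⁻¹) = ((m:ℂ)+1)⁻¹ := by
    simp [map_inv₀]
  rw [mul_pow, _root_.map_mul, _root_.map_pow, _root_.map_pow, hc, _root_.map_sum]
  rw [show (((m:ℂ)+1)⁻¹)^2 * (∑ k ∈ Finset.range (m+1), Complex.exp (2*Real.pi*Complex.I*k*t))^2 *
      ((((m:ℂ)+1)⁻¹)^2 * (∑ k ∈ Finset.range (m+1),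
        (starRingEnd ℂ) (Complex.exp (2*Real.pi*Complex.I*k*t)))^2)
    = ((m:ℂ)+1)⁻¹^4 * ((∑ k ∈ Finset.range (m+1), Complex.exp (2*Real.pi*Complex.I*k*t))^2 *
        (∑ k ∈ Finset.range (m+1), (starRingEnd ℂ) (Complex.exp (2*Real.pi*Complex.I*k*t)))^2)
      by ring]
  rw [expand4]
  congr 1
  refine Finset.sum_congr rfl fun a _ => Finset.sum_congr rfl fun b _ =>
    Finset.sum_congr rfl fun c _ => Finset.sum_congr rfl fun d _ => prod_exp a b c d t

theorem stmt7 (m : ℕ) (hm : 2 ≤ m) :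
    (∫ t in (0:ℝ)..1, ‖(dirich m t) ^ 2‖ ^ 2)
      = 1 / ((m : ℝ) + 1) * (2 / 3 + 1 / (3 * ((m : ℝ) + 1) ^ 2)) ∧
    1 / ((m : ℝ) + 1) * (2 / 3 + 1 / (3 * ((m : ℝ) + 1) ^ 2))
      ≤ 1 / ((m : ℝ) + 1) * (1 / Real.sqrt 2) := by
  constructor
  · -- the integral computation
    have hdc : Continuous (dirich m) := by
      unfold dirich; fun_prop
    have hFcont : Continuous fun t : ℝ =>
        (dirich m t)^2 * (starRingEnd ℂ) ((dirich m t)^2) :=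
      (hdc.pow 2).mul (Complex.continuous_conj.comp (hdc.pow 2))
    have hre : ∀ t : ℝ, ‖(dirich m t)^2‖^2
        = ((dirich m t)^2 * (starRingEnd ℂ) ((dirich m t)^2)).re := by
      intro t
      rw [Complex.mul_conj, Complex.ofReal_re, Complex.normSq_eq_norm_sq]
    have hswap : (∫ t in (0:ℝ)..1, ‖(dirich m t)^2‖^2)
        = (∫ t in (0:ℝ)..1, (dirich m t)^2 * (starRingEnd ℂ) ((dirich m t)^2)).re := by
      simp only [hre]
      have := Complex.reCLM.intervalIntegral_comp_comm
        (hFcont.intervalIntegrable (μ := volume) 0 1)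
      simpa using this
    have hval : (∫ t in (0:ℝ)..1, (dirich m t)^2 * (starRingEnd ℂ) ((dirich m t)^2))
        = ((m:ℂ)+1)⁻¹^4 * ∑ s ∈ Finset.range (2*m+1), ((min s (2*m - s) + 1 : ℕ) : ℂ)^2 := by
      simp only [hF]
      rw [intervalIntegral.integral_const_mul]
      congr 1
      have R := Finset.range (m+1)
      trans (∑ a ∈ Finset.range (m+1), ∑ b ∈ Finset.range (m+1), ∑ c ∈ Finset.range (m+1),
          ∑ d ∈ Finset.range (m+1), if ((a:ℤ)+b-c-d) = 0 then (1:ℂ) else 0)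
      · rw [intervalIntegral.integral_finset_sum
          (fun a _ => Continuous.intervalIntegrable (by fun_prop) 0 1)]
        refine Finset.sum_congr rfl fun a _ => ?_
        rw [intervalIntegral.integral_finset_sum
          (fun b _ => Continuous.intervalIntegrable (by fun_prop) 0 1)]
        refine Finset.sum_congr rfl fun b _ => ?_
        rw [intervalIntegral.integral_finset_sum
          (fun c _ => Continuous.intervalIntegrable (by fun_prop) 0 1)]
        refine Finset.sum_congr rfl fun c _ => ?_
        rw [intervalIntegral.integral_finset_sum
          (fun d _ => Continuous.intervalIntegrable (by fun_prop) 0 1)]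
        refine Finset.sum_congr rfl fun d _ => ?_
        exact int_exp _
      · have hcount : ∀ a ∈ Finset.range (m+1), ∀ b ∈ Finset.range (m+1),
            (∑ c ∈ Finset.range (m+1), ∑ d ∈ Finset.range (m+1),
              if ((a:ℤ)+b-c-d) = 0 then (1:ℂ) else 0)
            = ((min (a+b) (2*m - (a+b)) + 1 : ℕ) : ℂ) := by
          intro a ha b hb
          rw [Finset.mem_range] at ha hb
          have hcond : ∀ c ∈ Finset.range (m+1), ∀ d ∈ Finset.range (m+1),
              (if ((a:ℤ)+b-c-d) = 0 then (1:ℂ) else 0) = if c + d = a + b then 1 else 0 :=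
            fun c _ d _ => if_congr (by omega) rfl rfl
          rw [Finset.sum_congr rfl fun c hc => Finset.sum_congr rfl fun d hd => hcond c hc d hd]
          rw [← Finset.sum_product', Finset.sum_boole, fiber_card m (a+b) (by omega)]
        rw [Finset.sum_congr rfl fun a ha => Finset.sum_congr rfl fun b hb => hcount a ha b hb]
        rw [← Finset.sum_product',
          Finset.sum_comp (fun s : ℕ => ((min s (2*m - s) + 1 : ℕ) : ℂ)) (fun x : ℕ × ℕ => x.1 + x.2)]
        have himage : ((Finset.range (m+1) ×ˢ Finset.range (m+1)).image fun x : ℕ×ℕ => x.1 + x.2)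
            = Finset.range (2*m+1) := by
          ext s
          simp only [Finset.mem_image, Finset.mem_product, Finset.mem_range, Prod.exists]
          constructor
          · rintro ⟨a, b, ⟨ha, hb⟩, rfl⟩; omega
          · intro hs; exact ⟨min s m, s - min s m, ⟨by omega, by omega⟩, by omega⟩
        rw [himage]
        refine Finset.sum_congr rfl fun s hs => ?_
        rw [Finset.mem_range] at hs
        rw [fiber_card m s (by omega), nsmul_eq_mul, sq]
    rw [hswap, hval]
    have hK : (6:ℝ) * ∑ s ∈ Finset.range (2*m+1), ((min s (2*m - s) + 1 : ℕ) : ℝ)^2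
        = ((m:ℝ)*(m+1)*(2*m+1) + (m+1)*(m+2)*(2*m+3)) := by
      exact_mod_cast big_sum m
    have hcast : (((m:ℂ)+1)⁻¹^4 * ∑ s ∈ Finset.range (2*m+1),
          ((min s (2*m - s) + 1 : ℕ) : ℂ)^2).re
        = ((m:ℝ)+1)⁻¹^4 * ∑ s ∈ Finset.range (2*m+1), ((min s (2*m - s) + 1 : ℕ) : ℝ)^2 := by
      have : (((m:ℂ)+1)⁻¹^4 * ∑ s ∈ Finset.range (2*m+1), ((min s (2*m - s) + 1 : ℕ) : ℂ)^2)
          = ((((m:ℝ)+1)⁻¹^4 * ∑ s ∈ Finset.range (2*m+1),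
              ((min s (2*m - s) + 1 : ℕ) : ℝ)^2 : ℝ) : ℂ) := by
        norm_cast
        push_cast
        congr 1
        refine Finset.sum_congr rfl fun x _ => ?_
        norm_cast
      rw [this, Complex.ofReal_re]
    rw [hcast]
    have hm1 : ((m:ℝ)+1) ≠ 0 := by positivity
    have hS : (∑ s ∈ Finset.range (2*m+1), ((min s (2*m - s) + 1 : ℕ) : ℝ)^2)
        = ((m:ℝ)*(m+1)*(2*m+1) + (m+1)*(m+2)*(2*m+3)) / 6 := by
      rw [eq_div_iff (by norm_num : (6:ℝ) ≠ 0)]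
      linarith [hK]
    rw [hS]
    field_simp
    ring
  · -- the inequality
    have hm1 : (0:ℝ) ≤ 1 / ((m:ℝ)+1) := by positivity
    have hmr : (2:ℝ) ≤ (m:ℝ) := by exact_mod_cast hm
    refine mul_le_mul_of_nonneg_left ?_ hm1
    have h1 : 1 / (3*((m:ℝ)+1)^2) ≤ 1/27 := by
      rw [div_le_div_iff₀ (by positivity) (by norm_num)]
      nlinarith
    have hsqrt : Real.sqrt 2 ≤ 27/19 := by
      rw [show (27:ℝ)/19 = Real.sqrt ((27/19)^2) from (Real.sqrt_sq (by norm_num)).symm]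
      exact Real.sqrt_le_sqrt (by norm_num)
    have hs2 : (0:ℝ) < Real.sqrt 2 := Real.sqrt_pos.mpr (by norm_num)
    have h2 : (19:ℝ)/27 ≤ 1 / Real.sqrt 2 := by
      calc (19:ℝ)/27 = 1/(27/19) := by norm_num
        _ ≤ 1 / Real.sqrt 2 := one_div_le_one_div_of_le hs2 hsqrt
    calc 2/3 + 1/(3*((m:ℝ)+1)^2) ≤ 2/3 + 1/27 := by linarith
      _ = 19/27 := by norm_num
      _ ≤ 1 / Real.sqrt 2 := h2
end

section
/- For m ∈ ℕ and t, t' ∈ [0,1), one has |d_m(t')|·|d_m(t'−t)| ≤ (1/(2(m+1)))·min(1/w(t'−t), 1/w(t')) ≤ 1/((m+1)·w(t)), where w is the wrap-around distance, provided t, t', t'−t are all nonzero mod 1. -/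
open Real Matrix MeasureTheory

lemma wrap_bdd (x : ℝ) : BddBelow (Set.range fun r : ℤ => |x + (r : ℝ)|) :=
  ⟨0, by rintro _ ⟨r, rfl⟩; positivity⟩

lemma wrap_le (x : ℝ) (r : ℤ) : wrap x ≤ |x + r| := ciInf_le (wrap_bdd x) r

lemma wrap_nonneg (x : ℝ) : 0 ≤ wrap x := le_ciInf fun _ => abs_nonneg _

lemma wrap_Ico {x : ℝ} (hx : x ∈ Set.Ico (0:ℝ) 1) : wrap x = min x (1 - x) := by
  obtain ⟨h0, h1⟩ := hx
  refine le_antisymm (le_min ?_ ?_) (le_ciInf fun r => ?_)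
  · simpa [abs_of_nonneg h0] using wrap_le x 0
  · have := wrap_le x (-1)
    rw [show x + ((-1 : ℤ) : ℝ) = -(1 - x) by push_cast; ring, abs_neg,
      abs_of_nonneg (by linarith)] at this
    exact this
  · rcases le_or_gt 1 (r : ℝ) with h | h
    · rw [abs_of_nonneg (by linarith)]
      exact (min_le_left _ _).trans (by linarith)
    · rcases le_or_gt (r : ℝ) (-1) with h' | h'
      · rw [abs_of_nonpos (by linarith)]
        exact (min_le_right _ _).trans (by linarith)
      · have hr1 : r < 1 := by exact_mod_cast h
        have hr2 : -1 < r := by exact_mod_cast h'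
        have : r = 0 := by omega
        subst this
        simpa [abs_of_nonneg h0] using min_le_left x (1 - x)

lemma wrap_add_int (x : ℝ) (n : ℤ) : wrap (x + n) = wrap x := by
  refine le_antisymm (le_ciInf fun r => ?_) (le_ciInf fun r => ?_)
  · have := wrap_le (x + n) (r - n)
    rwa [show x + (n : ℝ) + ((r - n : ℤ) : ℝ) = x + r by push_cast; ring] at this
  · have := wrap_le x (r + n)
    rwa [show x + ((r + n : ℤ) : ℝ) = x + n + r by push_cast; ring] at this

lemma wrap_fract (x : ℝ) : wrap (Int.fract x) = wrap x := by
  have := wrap_add_int (Int.fract x) ⌊x⌋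
  rw [Int.fract_add_floor] at this
  exact this.symm

lemma wrap_neg (x : ℝ) : wrap (-x) = wrap x := by
  refine le_antisymm (le_ciInf fun r => ?_) (le_ciInf fun r => ?_)
  · have := wrap_le (-x) (-r)
    rwa [show -x + ((-r : ℤ) : ℝ) = -(x + r) by push_cast; ring, abs_neg] at this
  · have := wrap_le x (-r)
    rwa [show x + ((-r : ℤ) : ℝ) = -(-x + r) by push_cast; ring, abs_neg] at this

lemma wrap_exists (x : ℝ) : ∃ r : ℤ, wrap x = |x + r| := by
  have hmem : Int.fract x ∈ Set.Ico (0:ℝ) 1 := ⟨Int.fract_nonneg x, Int.fract_lt_one x⟩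
  have hw : wrap x = min (Int.fract x) (1 - Int.fract x) := by
    rw [← wrap_fract, wrap_Ico hmem]
  rcases le_total (Int.fract x) (1 - Int.fract x) with h | h
  · refine ⟨-⌊x⌋, ?_⟩
    rw [hw, min_eq_left h,
      show x + ((-⌊x⌋ : ℤ) : ℝ) = Int.fract x by rw [Int.fract]; push_cast; ring,
      abs_of_nonneg hmem.1]
  · refine ⟨-⌊x⌋ - 1, ?_⟩
    rw [hw, min_eq_right h,
      show x + ((-⌊x⌋ - 1 : ℤ) : ℝ) = -(1 - Int.fract x) by rw [Int.fract]; push_cast; ring,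
      abs_neg, abs_of_nonneg (by linarith [hmem.2])]

lemma wrap_triangle (a b : ℝ) : wrap (a + b) ≤ wrap a + wrap b := by
  obtain ⟨ra, hra⟩ := wrap_exists a
  obtain ⟨rb, hrb⟩ := wrap_exists b
  calc wrap (a + b) ≤ |a + b + ((ra + rb : ℤ) : ℝ)| := wrap_le _ _
    _ ≤ |a + ra| + |b + rb| := by
        push_cast
        rw [show a + b + ((ra:ℝ) + rb) = (a + ra) + (b + rb) by ring]
        exact abs_add_le _ _
    _ = wrap a + wrap b := by rw [hra, hrb]

lemma two_wrap_le_abs_sin (s : ℝ) : 2 * wrap s ≤ |Real.sin (π * s)| := by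
  have hmem : Int.fract s ∈ Set.Ico (0:ℝ) 1 := ⟨Int.fract_nonneg s, Int.fract_lt_one s⟩
  have hws : wrap s = min (Int.fract s) (1 - Int.fract s) := by
    rw [← wrap_fract, wrap_Ico hmem]
  have hsin : |Real.sin (π * s)| = |Real.sin (π * Int.fract s)| := by
    have heq : π * s = π * Int.fract s + ⌊s⌋ * π := by rw [Int.fract]; ring
    rw [heq, Real.sin_add_int_mul_pi, abs_mul]
    have : |((-1:ℝ)) ^ ⌊s⌋| = 1 := by
      rcases Int.even_or_odd ⌊s⌋ with he | ho
      · rw [he.neg_one_zpow]; norm_num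
      · rw [ho.neg_one_zpow]; norm_num
    rw [this, one_mul]
  rw [hsin, hws]
  set u := Int.fract s
  have hpi := Real.pi_pos
  rcases le_total u (1/2) with h | h
  · rw [min_eq_left (by linarith)]
    have hle := Real.mul_le_sin (x := π * u) (mul_nonneg hpi.le hmem.1) (by nlinarith [hmem.1])
    have h2 : 2 / π * (π * u) = 2 * u := by field_simp
    rw [h2] at hle
    exact hle.trans (le_abs_self _)
  · rw [min_eq_right (by linarith)]
    have heq : Real.sin (π * u) = Real.sin (π * (1 - u)) := by
      rw [show π * (1 - u) = π - π * u by ring, Real.sin_pi_sub]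
    have hle := Real.mul_le_sin (x := π * (1 - u)) (by nlinarith [hmem.2]) (by nlinarith)
    have h2 : 2 / π * (π * (1 - u)) = 2 * (1 - u) := by field_simp
    rw [h2] at hle
    rw [heq]
    exact hle.trans (le_abs_self _)

lemma abs_exp_I_sub_one (θ : ℝ) :
    ‖Complex.exp (θ * Complex.I) - 1‖ = 2 * |Real.sin (θ / 2)| := by
  have h : Complex.exp (↑θ * Complex.I) - 1 = Complex.mk (Real.cos θ - 1) (Real.sin θ) := by
    rw [Complex.exp_mul_I]
    apply Complex.ext <;> simp [Complex.cos_ofReal_re, Complex.sin_ofReal_re]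
  rw [h, Complex.norm_def, Complex.normSq_mk]
  have hc := Real.cos_sq (θ / 2)
  rw [show (2 : ℝ) * (θ / 2) = θ by ring] at hc
  have key : (Real.cos θ - 1) * (Real.cos θ - 1) + Real.sin θ * Real.sin θ
      = (2 * |Real.sin (θ / 2)|) ^ 2 := by
    have h1 := Real.sin_sq_add_cos_sq θ
    have h2 := Real.sin_sq_add_cos_sq (θ / 2)
    have habs := sq_abs (Real.sin (θ / 2))
    nlinarith
  rw [key, Real.sqrt_sq (by positivity)]

lemma exp_term_eq (s : ℝ) (k : ℕ) :
    Complex.exp (2 * Real.pi * Complex.I * k * s)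
      = Complex.exp ((2 * π * s : ℝ) * Complex.I) ^ k := by
  rw [← Complex.exp_nat_mul]
  congr 1
  push_cast
  ring

lemma dirich_abs_le_one (m : ℕ) (s : ℝ) : ‖dirich m s‖ ≤ 1 := by
  rw [dirich, norm_mul]
  have h1 : ‖((m : ℂ) + 1)⁻¹‖ = ((m : ℝ) + 1)⁻¹ := by
    rw [show ((m:ℂ)+1) = ((m+1:ℕ):ℂ) by push_cast; ring, norm_inv, Complex.norm_natCast]
    push_cast
    ring
  have h2 : ‖∑ k ∈ Finset.range (m + 1), Complex.exp (2 * Real.pi * Complex.I * k * s)‖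
      ≤ m + 1 := by
    refine (norm_sum_le _ _).trans ?_
    have heq : ∀ k ∈ Finset.range (m + 1),
        ‖Complex.exp (2 * Real.pi * Complex.I * k * s)‖ = 1 := by
      intro k _
      rw [exp_term_eq, norm_pow, Complex.norm_exp_ofReal_mul_I, one_pow]
    rw [Finset.sum_congr rfl heq]
    simp
  rw [h1]
  calc ((m:ℝ)+1)⁻¹ * _ ≤ ((m:ℝ)+1)⁻¹ * ((m:ℝ)+1) :=
        mul_le_mul_of_nonneg_left h2 (by positivity)
    _ = 1 := by field_simp

lemma dirich_key (m : ℕ) (s : ℝ) (hs : wrap s ≠ 0) :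
    ‖dirich m s‖ ≤ 1 / (2 * ((m : ℝ) + 1) * wrap s) := by
  have hw : 0 < wrap s := lt_of_le_of_ne (wrap_nonneg s) (Ne.symm hs)
  set z : ℂ := Complex.exp ((2 * π * s : ℝ) * Complex.I) with hz
  have hsin : 2 * wrap s ≤ |Real.sin (π * s)| := two_wrap_le_abs_sin s
  have habs : ‖z - 1‖ = 2 * |Real.sin (π * s)| := by
    rw [hz, abs_exp_I_sub_one, show (2 * π * s) / 2 = π * s by ring]
  have hzne : z ≠ 1 := by
    intro h
    have h0 : ‖z - 1‖ = 0 := by rw [h]; simp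
    rw [habs] at h0
    nlinarith
  have hsum : ∑ k ∈ Finset.range (m + 1), Complex.exp (2 * Real.pi * Complex.I * k * s)
      = (z ^ (m + 1) - 1) / (z - 1) := by
    rw [Finset.sum_congr rfl fun k _ => exp_term_eq s k]
    exact geom_sum_eq hzne (m + 1)
  have hnum : ‖z ^ (m + 1) - 1‖ ≤ 2 := by
    have h1 : ‖z ^ (m + 1)‖ = 1 := by
      rw [norm_pow, hz, Complex.norm_exp_ofReal_mul_I, one_pow]
    have h2 := norm_sub_le (z ^ (m + 1)) 1
    simp only [norm_one] at h2
    rw [h1] at h2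
    linarith
  rw [dirich, norm_mul, hsum, norm_div, habs]
  have h1 : ‖((m : ℂ) + 1)⁻¹‖ = ((m : ℝ) + 1)⁻¹ := by
    rw [show ((m:ℂ)+1) = ((m+1:ℕ):ℂ) by push_cast; ring, norm_inv, Complex.norm_natCast]
    push_cast
    ring
  rw [h1]
  have hA : ‖z ^ (m + 1) - 1‖ / (2 * |Real.sin (π * s)|) ≤ 2 / (4 * wrap s) := by
    apply div_le_div₀ (by norm_num) hnum (by positivity) (by nlinarith)
  calc ((m:ℝ)+1)⁻¹ * (‖z ^ (m + 1) - 1‖ / (2 * |Real.sin (π * s)|))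
      ≤ ((m:ℝ)+1)⁻¹ * (2 / (4 * wrap s)) := mul_le_mul_of_nonneg_left hA (by positivity)
    _ = 1 / (2 * ((m : ℝ) + 1) * wrap s) := by field_simp; ring

theorem stmt9 (m : ℕ) (t t' : ℝ) (ht : t ∈ Set.Ico (0:ℝ) 1) (ht' : t' ∈ Set.Ico (0:ℝ) 1)
    (h1 : wrap t ≠ 0) (h2 : wrap t' ≠ 0) (h3 : wrap (t' - t) ≠ 0) :
    ‖dirich m t'‖ * ‖dirich m (t' - t)‖
      ≤ 1 / (2 * ((m : ℝ) + 1)) * min (1 / wrap (t' - t)) (1 / wrap t') ∧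
    1 / (2 * ((m : ℝ) + 1)) * min (1 / wrap (t' - t)) (1 / wrap t')
      ≤ 1 / (((m : ℝ) + 1) * wrap t) := by
  have hw1 : 0 < wrap (t' - t) := lt_of_le_of_ne (wrap_nonneg _) (Ne.symm h3)
  have hw2 : 0 < wrap t' := lt_of_le_of_ne (wrap_nonneg _) (Ne.symm h2)
  have hwt : 0 < wrap t := lt_of_le_of_ne (wrap_nonneg _) (Ne.symm h1)
  have hm : (0:ℝ) < (m:ℝ) + 1 := by positivity
  have htri : wrap t ≤ wrap t' + wrap (t' - t) := by
    have := wrap_triangle t' (t - t')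
    rw [show t' + (t - t') = t by ring] at this
    have hneg : wrap (t - t') = wrap (t' - t) := by
      rw [show t - t' = -(t' - t) by ring, wrap_neg]
    rw [hneg] at this
    exact this
  rcases le_total (wrap (t' - t)) (wrap t') with h | h
  · have hmin : min (1 / wrap (t' - t)) (1 / wrap t') = 1 / wrap t' :=
      min_eq_right (one_div_le_one_div_of_le hw1 h)
    rw [hmin]
    constructor
    · calc ‖dirich m t'‖ * ‖dirich m (t' - t)‖
          ≤ (1 / (2 * ((m : ℝ) + 1) * wrap t')) * 1 :=
            mul_le_mul (dirich_key m t' h2) (dirich_abs_le_one m _)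
              (norm_nonneg _) (by positivity)
        _ = 1 / (2 * ((m : ℝ) + 1)) * (1 / wrap t') := by
            rw [mul_one, div_mul_div_comm, one_mul]
    · rw [show (1:ℝ) / (2 * ((m:ℝ) + 1)) * (1 / wrap t') = 1 / (2 * ((m:ℝ) + 1) * wrap t') by rw [div_mul_div_comm, one_mul]]
      rw [div_le_div_iff₀ (by positivity) (by positivity)]
      nlinarith
  · have hmin : min (1 / wrap (t' - t)) (1 / wrap t') = 1 / wrap (t' - t) :=
      min_eq_left (one_div_le_one_div_of_le hw2 h)
    rw [hmin]
    constructor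
    · calc ‖dirich m t'‖ * ‖dirich m (t' - t)‖
          ≤ 1 * (1 / (2 * ((m : ℝ) + 1) * wrap (t' - t))) :=
            mul_le_mul (dirich_abs_le_one m _) (dirich_key m _ h3)
              (norm_nonneg _) (by norm_num)
        _ = 1 / (2 * ((m : ℝ) + 1)) * (1 / wrap (t' - t)) := by
            rw [one_mul, div_mul_div_comm, one_mul]
    · rw [show (1:ℝ) / (2 * ((m:ℝ) + 1)) * (1 / wrap (t' - t))
          = 1 / (2 * ((m:ℝ) + 1) * wrap (t' - t)) by rw [div_mul_div_comm, one_mul]]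
      rw [div_le_div_iff₀ (by positivity) (by positivity)]
      nlinarith
end

section
/- For x ∈ [0,1] and integer m ≥ 4, one has sin(πx)/((m+1)·sin(πx/(m+1))) ≤ exp(−π²((m+1)²−1)x²/(6(m+1)²)) ≤ exp(−4π²x²/25). -/
open Real Matrix MeasureTheory

private lemma taylor_step' (f f' : ℝ → ℝ) (hf : ∀ t, HasDerivAt f (f' t) t) (h0 : f 0 = 0)
    (hf' : ∀ t, 0 ≤ t → 0 ≤ f' t) {t : ℝ} (ht : 0 ≤ t) : 0 ≤ f t := by
  have hmono : MonotoneOn f (Set.Ici 0) := by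
    apply monotoneOn_of_deriv_nonneg (convex_Ici 0)
      (fun x _ => (hf x).differentiableAt.continuousAt.continuousWithinAt)
      (fun x _ => ((hf x).differentiableAt).differentiableWithinAt)
    intro x hx
    rw [(hf x).deriv]
    exact hf' x (le_of_lt (by simpa using hx))
  have := hmono (Set.self_mem_Ici) (by exact ht) ht
  simpa [h0] using this

private lemma sinT3' {t : ℝ} (ht : 0 ≤ t) : t - t^3/6 ≤ Real.sin t := by
  have := taylor_step' (fun t => Real.sin t - (t - t^3/6))
    (fun t => Real.cos t - (1 - t^2/2))
    (fun t => by
      have h1 := (Real.hasDerivAt_sin t).sub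
        (((hasDerivAt_id t).sub ((hasDerivAt_pow 3 t).div_const 6)))
      refine h1.congr_deriv ?_; simp; ring)
    (by norm_num)
    (fun t _ => by have := Real.one_sub_sq_div_two_le_cos (x := t); linarith) ht
  linarith

private lemma cosT4' {t : ℝ} (ht : 0 ≤ t) : Real.cos t ≤ 1 - t^2/2 + t^4/24 := by
  have := taylor_step' (fun t => (1 - t^2/2 + t^4/24) - Real.cos t)
    (fun t => (Real.sin t - (t - t^3/6)))
    (fun t => by
      have h1 := ((((hasDerivAt_const t (1:ℝ)).sub ((hasDerivAt_pow 2 t).div_const 2)).add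
        ((hasDerivAt_pow 4 t).div_const 24)).sub (Real.hasDerivAt_cos t))
      refine h1.congr_deriv ?_; simp; ring)
    (by norm_num)
    (fun t h => by have := sinT3' h; linarith) ht
  linarith

private lemma sinT5' {t : ℝ} (ht : 0 ≤ t) : Real.sin t ≤ t - t^3/6 + t^5/120 := by
  have := taylor_step' (fun t => (t - t^3/6 + t^5/120) - Real.sin t)
    (fun t => ((1 - t^2/2 + t^4/24) - Real.cos t))
    (fun t => by
      have h1 := ((((hasDerivAt_id t).sub ((hasDerivAt_pow 3 t).div_const 6)).add
        ((hasDerivAt_pow 5 t).div_const 120)).sub (Real.hasDerivAt_sin t))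
      refine h1.congr_deriv ?_; simp; ring)
    (by norm_num)
    (fun t h => by have := cosT4' h; linarith) ht
  linarith

private lemma cosT6' {t : ℝ} (ht : 0 ≤ t) : 1 - t^2/2 + t^4/24 - t^6/720 ≤ Real.cos t := by
  have := taylor_step' (fun t => Real.cos t - (1 - t^2/2 + t^4/24 - t^6/720))
    (fun t => ((t - t^3/6 + t^5/120) - Real.sin t))
    (fun t => by
      have h1 := (Real.hasDerivAt_cos t).sub
        ((((hasDerivAt_const t (1:ℝ)).sub ((hasDerivAt_pow 2 t).div_const 2)).add
          ((hasDerivAt_pow 4 t).div_const 24)).sub ((hasDerivAt_pow 6 t).div_const 720))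
      refine h1.congr_deriv ?_; simp; ring)
    (by norm_num)
    (fun t h => by have := sinT5' h; linarith) ht
  linarith

private lemma sinT7' {t : ℝ} (ht : 0 ≤ t) : t - t^3/6 + t^5/120 - t^7/5040 ≤ Real.sin t := by
  have := taylor_step' (fun t => Real.sin t - (t - t^3/6 + t^5/120 - t^7/5040))
    (fun t => (Real.cos t - (1 - t^2/2 + t^4/24 - t^6/720)))
    (fun t => by
      have h1 := (Real.hasDerivAt_sin t).sub
        ((((hasDerivAt_id t).sub ((hasDerivAt_pow 3 t).div_const 6)).add
          ((hasDerivAt_pow 5 t).div_const 120)).sub ((hasDerivAt_pow 7 t).div_const 5040))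
      refine h1.congr_deriv ?_; simp; ring)
    (by norm_num)
    (fun t h => by have := cosT6' h; linarith) ht
  linarith

private lemma expD' (w : ℝ) : HasDerivAt (fun w : ℝ => Real.exp (-w)) (-Real.exp (-w)) w := by
  simpa [Function.comp_def] using (Real.hasDerivAt_exp (-w)).comp w (hasDerivAt_neg w)

private lemma expE2' {w : ℝ} (hw : 0 ≤ w) : Real.exp (-w) ≤ 1 - w + w^2/2 := by
  have := taylor_step' (fun w => (1 - w + w^2/2) - Real.exp (-w))
    (fun w => Real.exp (-w) - (1 - w))
    (fun w => by
      have h1 := (((hasDerivAt_const w (1:ℝ)).sub (hasDerivAt_id w)).add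
        ((hasDerivAt_pow 2 w).div_const 2)).sub (expD' w)
      refine h1.congr_deriv ?_; simp; ring)
    (by norm_num)
    (fun w _ => by
      have := Real.add_one_le_exp (-w)
      show (0:ℝ) ≤ Real.exp (-w) - (1 - w); linarith) hw
  linarith

private lemma expE3' {w : ℝ} (hw : 0 ≤ w) : 1 - w + w^2/2 - w^3/6 ≤ Real.exp (-w) := by
  have := taylor_step' (fun w => Real.exp (-w) - (1 - w + w^2/2 - w^3/6))
    (fun w => (1 - w + w^2/2) - Real.exp (-w))
    (fun w => by
      have h1 := (expD' w).sub ((((hasDerivAt_const w (1:ℝ)).sub (hasDerivAt_id w)).add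
        ((hasDerivAt_pow 2 w).div_const 2)).sub ((hasDerivAt_pow 3 w).div_const 6))
      refine h1.congr_deriv ?_; simp; ring)
    (by norm_num)
    (fun w h => by have := expE2' h; linarith) hw
  linarith

private lemma expE4' {w : ℝ} (hw : 0 ≤ w) : Real.exp (-w) ≤ 1 - w + w^2/2 - w^3/6 + w^4/24 := by
  have := taylor_step' (fun w => (1 - w + w^2/2 - w^3/6 + w^4/24) - Real.exp (-w))
    (fun w => Real.exp (-w) - (1 - w + w^2/2 - w^3/6))
    (fun w => by
      have h1 := ((((((hasDerivAt_const w (1:ℝ)).sub (hasDerivAt_id w)).add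
        ((hasDerivAt_pow 2 w).div_const 2)).sub ((hasDerivAt_pow 3 w).div_const 6)).add
        ((hasDerivAt_pow 4 w).div_const 24)).sub (expD' w))
      refine h1.congr_deriv ?_; simp; ring)
    (by norm_num)
    (fun w h => by have := expE3' h; linarith) hw
  linarith

private lemma expE5' {w : ℝ} (hw : 0 ≤ w) :
    1 - w + w^2/2 - w^3/6 + w^4/24 - w^5/120 ≤ Real.exp (-w) := by
  have := taylor_step' (fun w => Real.exp (-w) - (1 - w + w^2/2 - w^3/6 + w^4/24 - w^5/120))
    (fun w => (1 - w + w^2/2 - w^3/6 + w^4/24) - Real.exp (-w))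
    (fun w => by
      have h1 := (expD' w).sub (((((((hasDerivAt_const w (1:ℝ)).sub (hasDerivAt_id w)).add
        ((hasDerivAt_pow 2 w).div_const 2)).sub ((hasDerivAt_pow 3 w).div_const 6)).add
        ((hasDerivAt_pow 4 w).div_const 24)).sub ((hasDerivAt_pow 5 w).div_const 120)))
      refine h1.congr_deriv ?_; simp; ring)
    (by norm_num)
    (fun w h => by have := expE4' h; linarith) hw
  linarith

private lemma auxq' {s : ℝ} (h1 : 0 ≤ s) (h2 : s ≤ 9.8697) :
    0 ≤ 4991/900000 - s/1296 + s^2/31104 - s^3/933120 := by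
  nlinarith [mul_nonneg (sub_nonneg.mpr h2) (sq_nonneg (s - 10.065)), sq_nonneg s, h1]

private lemma auxp' {s : ℝ} (h1 : 0 ≤ s) (h2 : s ≤ 0.3948) :
    0 ≤ 1/1440 - s*(1/5040 + 1/960) - s^2/51200 := by
  nlinarith [mul_nonneg h1 h1, mul_le_mul_of_nonneg_left h2 h1]

private lemma lemA' {t : ℝ} (h0 : 0 ≤ t) (h1 : t ≤ 3.141593) :
    Real.sin t ≤ t * Real.exp (-(t^2/6) - t^4/100000) := by
  have hu : 0 ≤ t^2/6 := by positivity
  have hc : 0 ≤ t^4/100000 := by positivity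
  have hX := expE5' hu
  have hX1 : Real.exp (-(t^2/6)) ≤ 1 := Real.exp_le_one_iff.mpr (by linarith)
  have hY : 1 - t^4/100000 ≤ Real.exp (-(t^4/100000)) := by
    have := Real.add_one_le_exp (-(t^4/100000)); linarith
  have hsplit : Real.exp (-(t^2/6) - t^4/100000)
      = Real.exp (-(t^2/6)) * Real.exp (-(t^4/100000)) := by
    rw [← Real.exp_add]; ring_nf
  have ht2 : t^2 ≤ 9.8697 := by nlinarith
  have hq' := auxq' (sq_nonneg t) ht2
  have hXpos : 0 ≤ Real.exp (-(t^2/6)) := (Real.exp_pos _).le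
  have key : 0 ≤ t * Real.exp (-(t^2/6)) * (Real.exp (-(t^4/100000)) - (1 - t^4/100000)) :=
    mul_nonneg (mul_nonneg h0 hXpos) (by linarith)
  have m1 : t * (1 - t^2/6 + (t^2/6)^2/2 - (t^2/6)^3/6 + (t^2/6)^4/24 - (t^2/6)^5/120)
      ≤ t * Real.exp (-(t^2/6)) := mul_le_mul_of_nonneg_left hX h0
  have m2 : t * Real.exp (-(t^2/6)) * (t^4/100000) ≤ t * (t^4/100000) := by
    nlinarith [mul_nonneg h0 hc]
  have hT := sinT5' h0
  have hpoly : 0 ≤ t^5 * (4991/900000 - t^2/1296 + (t^2)^2/31104 - (t^2)^3/933120) :=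
    mul_nonneg (pow_nonneg h0 5) hq'
  rw [hsplit]
  nlinarith [key, m1, m2, hT, hpoly]

private lemma lemB' {θ : ℝ} (h0 : 0 ≤ θ) (h1 : θ ≤ 0.6283186) :
    θ * Real.exp (-(θ^2/6) - θ^4/160) ≤ Real.sin θ := by
  have hw : 0 ≤ θ^2/6 + θ^4/160 := by positivity
  have hE : Real.exp (-(θ^2/6) - θ^4/160) ≤ 1 - (θ^2/6 + θ^4/160) + (θ^2/6 + θ^4/160)^2/2 := by
    have h := expE2' hw
    have heq : -(θ^2/6) - θ^4/160 = -(θ^2/6 + θ^4/160) := by ring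
    rw [heq]; exact h
  have m1 : θ * Real.exp (-(θ^2/6) - θ^4/160)
      ≤ θ * (1 - (θ^2/6 + θ^4/160) + (θ^2/6 + θ^4/160)^2/2) := mul_le_mul_of_nonneg_left hE h0
  have ht2 : θ^2 ≤ 0.3948 := by nlinarith
  have hp' := auxp' (sq_nonneg θ) ht2
  have hpoly : 0 ≤ θ^5 * (1/1440 - θ^2*(1/5040 + 1/960) - (θ^2)^2/51200) :=
    mul_nonneg (pow_nonneg h0 5) hp'
  have hT := sinT7' h0
  nlinarith [m1, hpoly, hT]

set_option maxHeartbeats 1000000 in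
theorem stmt12 (m : ℕ) (hm : 4 ≤ m) (x : ℝ) (hx : x ∈ Set.Icc (0:ℝ) 1) :
    Real.sin (π * x) / (((m : ℝ) + 1) * Real.sin (π * x / ((m : ℝ) + 1)))
      ≤ Real.exp (-(π ^ 2 * (((m : ℝ) + 1) ^ 2 - 1) * x ^ 2) / (6 * ((m : ℝ) + 1) ^ 2)) ∧
    Real.exp (-(π ^ 2 * (((m : ℝ) + 1) ^ 2 - 1) * x ^ 2) / (6 * ((m : ℝ) + 1) ^ 2))
      ≤ Real.exp (-(4 * π ^ 2 * x ^ 2) / 25) := by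
  obtain ⟨hx0, hx1⟩ := hx
  set N : ℝ := (m : ℝ) + 1 with hNdef
  have hN5 : (5:ℝ) ≤ N := by
    have h4 : (4:ℝ) ≤ (m:ℝ) := by exact_mod_cast hm
    rw [hNdef]; linarith
  have hN0 : (0:ℝ) < N := by linarith
  have hpi : π < 3.141593 := Real.pi_lt_d6
  have hpi0 : 0 < π := Real.pi_pos
  constructor
  · -- main inequality
    rcases eq_or_lt_of_le hx0 with h | hxpos
    · simp [← h]
    · set θ : ℝ := π * x / N with hθdef
      have hθ0 : 0 < θ := by positivity
      have hθπ5 : θ ≤ π / 5 := by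
        rw [hθdef, div_le_div_iff₀ hN0 (by norm_num)]
        nlinarith
      have hθub : θ ≤ 0.6283186 := by nlinarith
      have hsinθ : 0 < Real.sin θ := Real.sin_pos_of_pos_of_lt_pi hθ0 (by nlinarith)
      have hden : 0 < N * Real.sin θ := mul_pos hN0 hsinθ
      rw [div_le_iff₀ hden]
      have ht0 : 0 ≤ π * x := by positivity
      have ht1 : π * x ≤ 3.141593 := by nlinarith
      have hA := lemA' ht0 ht1
      have hB := lemB' hθ0.le hθub
      have hNθ : N * θ = π * x := by rw [hθdef]; field_simp
      -- exponent comparison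
      have hexp : -( (π*x)^2/6) - (π*x)^4/100000
          ≤ -(π ^ 2 * (N ^ 2 - 1) * x ^ 2) / (6 * N ^ 2) + (-(θ^2/6) - θ^4/160) := by
        have hθ2 : θ^2 = (π*x)^2 / N^2 := by rw [hθdef, div_pow]
        have hθ4 : θ^4 = (π*x)^4 / N^4 := by rw [hθdef, div_pow]
        rw [hθ2, hθ4]
        have hquad : -(π ^ 2 * (N ^ 2 - 1) * x ^ 2) / (6 * N ^ 2) - ((π*x)^2 / N^2)/6
            = -((π*x)^2/6) := by field_simp; ring
        have h25 : (25:ℝ) ≤ N^2 := by nlinarith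
        have hN4 : (625:ℝ) ≤ N^4 := by nlinarith [sq_nonneg (N^2 - 25)]
        have hquart : ((π*x)^4 / N^4)/160 ≤ (π*x)^4/100000 := by
          rw [div_div, div_le_div_iff₀ (by positivity) (by norm_num)]
          linarith [mul_le_mul_of_nonneg_left hN4 (pow_nonneg ht0 4)]
        linarith
      calc Real.sin (π * x) ≤ (π*x) * Real.exp (-((π*x)^2/6) - (π*x)^4/100000) := hA
        _ ≤ (π*x) * Real.exp (-(π ^ 2 * (N ^ 2 - 1) * x ^ 2) / (6 * N ^ 2) + (-(θ^2/6) - θ^4/160)) := by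
            apply mul_le_mul_of_nonneg_left (Real.exp_le_exp.mpr hexp) ht0
        _ = Real.exp (-(π ^ 2 * (N ^ 2 - 1) * x ^ 2) / (6 * N ^ 2))
              * (N * (θ * Real.exp (-(θ^2/6) - θ^4/160))) := by
            rw [Real.exp_add, ← hNθ]; ring
        _ ≤ Real.exp (-(π ^ 2 * (N ^ 2 - 1) * x ^ 2) / (6 * N ^ 2)) * (N * Real.sin θ) := by
            apply mul_le_mul_of_nonneg_left _ (Real.exp_pos _).le
            exact mul_le_mul_of_nonneg_left hB hN0.le
  · apply Real.exp_le_exp.mpr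
    have h25 : (25:ℝ) ≤ N^2 := by nlinarith
    have hp2 : 0 ≤ π^2 * x^2 := by positivity
    rw [div_le_div_iff₀ (by positivity) (by norm_num)]
    nlinarith [mul_nonneg hp2 (sub_nonneg.mpr h25)]
end

section
/- For λ ≥ 1, one has (⌊(λ−1)/2⌋!·⌈(λ−1)/2⌉!)^{-1} ≤ Γ((λ+1)/2)^{-2} ≤ (2e)^{λ−1}/λ^λ, so that the maximal cluster complexity of λ equispaced nodes with normalized separation τ satisfies C = τ^{1−λ}·(⌊(λ−1)/2⌋!·⌈(λ−1)/2⌉!)^{-1} ≤ (2e)^{λ−1}·τ^{1−λ}/λ^λ. -/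
open Real Matrix MeasureTheory

lemma log_le_pade {t : ℝ} (ht : 0 ≤ t) : Real.log (1 + t) ≤ t * (6 + t) / (6 + 4 * t) := by
  set f : ℝ → ℝ := fun x => x * (6 + x) / (6 + 4 * x) - Real.log (1 + x) with hf
  have hd : ∀ x : ℝ, 0 ≤ x → HasDerivAt f
      ((4*x^2+12*x+36)/(6+4*x)^2 - 1/(1+x)) x := by
    intro x hx
    have h1x : (0:ℝ) < 1 + x := by linarith
    have h64 : (6 + 4*x : ℝ) ≠ 0 := by positivity
    have h1 : HasDerivAt (fun x : ℝ => x * (6 + x)) (1 * (6 + x) + x * (0 + 1)) x :=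
      (hasDerivAt_id x).mul ((hasDerivAt_const x 6).add (hasDerivAt_id x))
    have h2 : HasDerivAt (fun x : ℝ => 6 + 4*x) 4 x := by
      simpa using ((hasDerivAt_id x).const_mul (4:ℝ)).const_add (6:ℝ)
    have hq := h1.div h2 h64
    have h3 : HasDerivAt (fun x : ℝ => 1 + x) (0 + 1) x :=
      (hasDerivAt_const x 1).add (hasDerivAt_id x)
    have hlog := (Real.hasDerivAt_log (ne_of_gt h1x)).comp x h3
    have : HasDerivAt f _ x := hq.sub hlog
    convert this using 1
    field_simp [h1x.ne']
    ring
  have hmono : MonotoneOn f (Set.Ici 0) := by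
    apply monotoneOn_of_deriv_nonneg (convex_Ici 0)
    · exact fun x hx => (hd x hx).continuousAt.continuousWithinAt
    · intro x hx
      rw [interior_Ici] at hx
      exact (hd x (le_of_lt hx)).differentiableAt.differentiableWithinAt
    · intro x hx
      rw [interior_Ici] at hx
      have hx' : (0:ℝ) < x := Set.mem_Ioi.1 hx
      rw [(hd x hx'.le).deriv]
      have h1x : (0:ℝ) < 1 + x := by linarith
      have h64 : (0:ℝ) < (6 + 4*x)^2 := by nlinarith
      rw [sub_nonneg, div_le_div_iff₀ h1x h64]
      nlinarith [pow_pos hx' 3]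
  have h0 : f 0 = 0 := by simp [hf]
  have := hmono (Set.self_mem_Ici) (Set.mem_Ici.2 ht) ht
  rw [h0] at this
  simp only [hf] at this
  linarith

lemma step_ineq (n : ℕ) (hn : 1 ≤ n) :
    ((n:ℝ)+2)^(n+2) ≤ Real.exp 1 ^ 2 * ((n:ℝ)+1)^2 * (n:ℝ)^n := by
  have hx : (1:ℝ) ≤ (n:ℝ) := by exact_mod_cast hn
  have hx0 : (0:ℝ) < n := by linarith
  set x : ℝ := (n:ℝ) with hxdef
  -- bound 1 : ((x+2)/x)^n ≤ exp (2*(3x+1)/(3x+4))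
  have A : ((x+2)/x)^n ≤ Real.exp (2*(3*x+1)/(3*x+4)) := by
    have ht : (0:ℝ) ≤ 2/x := by positivity
    have hlog : Real.log ((x+2)/x) ≤ (2/x)*(6+2/x)/(6+4*(2/x)) := by
      have h := log_le_pade ht
      have : (1:ℝ) + 2/x = (x+2)/x := by field_simp
      rwa [this] at h
    have hpos : (0:ℝ) < (x+2)/x := by positivity
    calc ((x+2)/x)^n = Real.exp (n * Real.log ((x+2)/x)) := by
          rw [Real.exp_nat_mul, Real.exp_log hpos]
      _ ≤ Real.exp (2*(3*x+1)/(3*x+4)) := by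
          apply Real.exp_le_exp.2
          have h2 : (n:ℝ) * ((2/x)*(6+2/x)/(6+4*(2/x))) = 2*(3*x+1)/(3*x+4) := by
            rw [← hxdef]; field_simp; ring
          calc (n:ℝ) * Real.log ((x+2)/x) ≤ (n:ℝ) * ((2/x)*(6+2/x)/(6+4*(2/x))) := by
                apply mul_le_mul_of_nonneg_left hlog (by positivity)
            _ = 2*(3*x+1)/(3*x+4) := h2
  -- bound 2 : ((x+2)/(x+1))^2 ≤ exp ((6x+7)/((x+1)(3x+5)))
  have B : ((x+2)/(x+1))^2 ≤ Real.exp ((6*x+7)/((x+1)*(3*x+5))) := by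
    have hs : (0:ℝ) ≤ 1/(x+1) := by positivity
    have hlog : Real.log ((x+2)/(x+1)) ≤ (1/(x+1))*(6+1/(x+1))/(6+4*(1/(x+1))) := by
      have h := log_le_pade hs
      have : (1:ℝ) + 1/(x+1) = (x+2)/(x+1) := by field_simp; ring
      rwa [this] at h
    have hpos : (0:ℝ) < (x+2)/(x+1) := by positivity
    calc ((x+2)/(x+1))^2 = Real.exp (2 * Real.log ((x+2)/(x+1))) := by
          rw [← Real.exp_log hpos, ← Real.exp_nat_mul]
          norm_num
      _ ≤ Real.exp ((6*x+7)/((x+1)*(3*x+5))) := by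
          apply Real.exp_le_exp.2
          have h2 : (2:ℝ) * ((1/(x+1))*(6+1/(x+1))/(6+4*(1/(x+1)))) = (6*x+7)/((x+1)*(3*x+5)) := by
            field_simp; ring
          calc (2:ℝ) * Real.log ((x+2)/(x+1)) ≤ 2 * ((1/(x+1))*(6+1/(x+1))/(6+4*(1/(x+1)))) := by
                linarith
            _ = (6*x+7)/((x+1)*(3*x+5)) := h2
  -- the exponents sum to at most 2
  have C : 2*(3*x+1)/(3*x+4) + (6*x+7)/((x+1)*(3*x+5)) ≤ 2 := by
    rw [div_add_div _ _ (by positivity) (by positivity), div_le_iff₀ (by positivity)]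
    nlinarith
  -- assemble
  have hsplit : ((x:ℝ)+2)^(n+2) = ((x+2)/(x+1))^2 * ((x+2)/x)^n * (((x+1)^2) * x^n) := by
    rw [div_pow, div_pow]
    field_simp
    ring
  rw [hsplit]
  have hpos2 : (0:ℝ) ≤ ((x+1)^2) * x^n := by positivity
  calc ((x+2)/(x+1))^2 * ((x+2)/x)^n * (((x+1)^2) * x^n)
      ≤ (Real.exp ((6*x+7)/((x+1)*(3*x+5))) * Real.exp (2*(3*x+1)/(3*x+4))) * (((x+1)^2) * x^n) := by
        apply mul_le_mul_of_nonneg_right _ hpos2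
        apply mul_le_mul B A (by positivity) (Real.exp_nonneg _)
    _ ≤ Real.exp 2 * (((x+1)^2) * x^n) := by
        apply mul_le_mul_of_nonneg_right _ hpos2
        rw [← Real.exp_add]
        exact Real.exp_le_exp.2 (by linarith)
    _ = Real.exp 1 ^ 2 * ((x+1)^2) * x^n := by
        rw [← Real.exp_nat_mul]
        norm_num
        ring

lemma gam_lower (n : ℕ) (hn : 1 ≤ n) :
    (n:ℝ)^n ≤ Real.Gamma (((n:ℝ)+1)/2)^2 * (2*Real.exp 1)^(n-1) := by
  have key : ∀ k : ℕ,
      ((k+1:ℕ):ℝ)^(k+1) ≤ Real.Gamma ((((k+1:ℕ):ℝ)+1)/2)^2 * (2*Real.exp 1)^k ∧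
      ((k+2:ℕ):ℝ)^(k+2) ≤ Real.Gamma ((((k+2:ℕ):ℝ)+1)/2)^2 * (2*Real.exp 1)^(k+1) := by
    intro k
    induction k with
    | zero =>
      constructor
      · norm_num [Real.Gamma_one]
      · have hg : Real.Gamma ((3:ℝ)/2) = (1/2) * Real.sqrt π := by
          rw [show (3:ℝ)/2 = 1/2 + 1 by norm_num,
            Real.Gamma_add_one (by norm_num), Real.Gamma_one_half_eq]
        push_cast
        rw [show ((2:ℝ)+1)/2 = (3:ℝ)/2 by norm_num, hg]
        have hsq : Real.sqrt π ^ 2 = π := Real.sq_sqrt pi_pos.le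
        have he := Real.exp_one_gt_d9
        have hpi := pi_gt_d6
        have hepos := Real.exp_pos 1
        nlinarith
    | succ k ih =>
      refine ⟨ih.2, ?_⟩
      have hQ := ih.1
      have hstep := step_ineq (k+1) (Nat.le_add_left 1 k)
      push_cast at hQ hstep ⊢
      have hG2 : Real.Gamma (((k:ℝ)+1+1)/2) = Real.Gamma (((k:ℝ)+2)/2) := by
        congr 1; ring
      rw [hG2] at hQ
      have hGadd : Real.Gamma (((k:ℝ)+1+2+1)/2) = (((k:ℝ)+2)/2) * Real.Gamma (((k:ℝ)+2)/2) := by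
        rw [show ((k:ℝ)+1+2+1)/2 = ((k:ℝ)+2)/2 + 1 by ring]
        exact Real.Gamma_add_one (by positivity)
      rw [hGadd]
      calc ((k:ℝ)+1+2)^(k+1+2)
          ≤ Real.exp 1 ^ 2 * ((k:ℝ)+1+1)^2 * ((k:ℝ)+1)^(k+1) := hstep
        _ ≤ Real.exp 1 ^ 2 * ((k:ℝ)+1+1)^2 *
            (Real.Gamma (((k:ℝ)+2)/2)^2 * (2*Real.exp 1)^k) := by
            apply mul_le_mul_of_nonneg_left hQ (by positivity)
        _ = ((((k:ℝ)+2)/2) * Real.Gamma (((k:ℝ)+2)/2))^2 * (2*Real.exp 1)^(k+1+1) := by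
            rw [pow_add]
            ring
  obtain ⟨k, rfl⟩ := Nat.exists_eq_add_of_le' hn
  simpa using (key k).1

theorem stmt13 (lam : ℕ) (hlam : 1 ≤ lam) :
    ((((lam - 1) / 2).factorial * (lam / 2).factorial : ℕ) : ℝ)⁻¹
        ≤ ((Real.Gamma (((lam : ℝ) + 1) / 2)) ^ 2)⁻¹ ∧
    ((Real.Gamma (((lam : ℝ) + 1) / 2)) ^ 2)⁻¹
        ≤ (2 * Real.exp 1) ^ (lam - 1) / (lam : ℝ) ^ lam ∧
    ∀ τ : ℝ, 0 < τ →
      (1 / τ) ^ (lam - 1) * ((((lam - 1) / 2).factorial * (lam / 2).factorial : ℕ) : ℝ)⁻¹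
        ≤ (2 * Real.exp 1) ^ (lam - 1) * (1 / τ) ^ (lam - 1) / (lam : ℝ) ^ lam := by
  have hlam0 : (0:ℝ) < lam := by exact_mod_cast hlam
  set a := (lam - 1) / 2 with ha
  set b := lam / 2 with hb
  have hab : a + b + 1 = lam := by omega
  have hlamr : (lam:ℝ) = (a:ℝ) + (b:ℝ) + 1 := by exact_mod_cast (congrArg (Nat.cast : ℕ → ℝ) hab).symm
  have hGa : Real.Gamma ((a:ℝ)+1) = a.factorial := Real.Gamma_nat_eq_factorial a
  have hGb : Real.Gamma ((b:ℝ)+1) = b.factorial := Real.Gamma_nat_eq_factorial b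
  have hxpos : (0:ℝ) < (a:ℝ)+1 := by positivity
  have hypos : (0:ℝ) < (b:ℝ)+1 := by positivity
  have hmpos : (0:ℝ) < ((lam:ℝ)+1)/2 := by positivity
  have hΓm : (0:ℝ) < Real.Gamma (((lam:ℝ)+1)/2) := Real.Gamma_pos_of_pos hmpos
  have hΓx : (0:ℝ) < Real.Gamma ((a:ℝ)+1) := Real.Gamma_pos_of_pos hxpos
  have hΓy : (0:ℝ) < Real.Gamma ((b:ℝ)+1) := Real.Gamma_pos_of_pos hypos
  -- Part 1 : Γ((lam+1)/2)^2 ≤ a! * b!  via log-convexity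
  have hconv := Real.convexOn_log_Gamma.2 (Set.mem_Ioi.2 hxpos) (Set.mem_Ioi.2 hypos)
      (by norm_num : (0:ℝ) ≤ 1/2) (by norm_num : (0:ℝ) ≤ 1/2) (by norm_num)
  simp only [smul_eq_mul, Function.comp_apply] at hconv
  have hmid : (1/2 : ℝ) * ((a:ℝ)+1) + (1/2 : ℝ) * ((b:ℝ)+1) = ((lam:ℝ)+1)/2 := by
    rw [hlamr]; ring
  rw [hmid] at hconv
  have hpart1 : Real.Gamma (((lam:ℝ)+1)/2) ^ 2
      ≤ ((a.factorial * b.factorial : ℕ) : ℝ) := by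
    have hlog : Real.log (Real.Gamma (((lam:ℝ)+1)/2) ^ 2)
        ≤ Real.log (Real.Gamma ((a:ℝ)+1) * Real.Gamma ((b:ℝ)+1)) := by
      rw [Real.log_pow, Real.log_mul (ne_of_gt hΓx) (ne_of_gt hΓy)]
      push_cast
      linarith
    have := (Real.log_le_log_iff (by positivity) (by positivity)).1 hlog
    calc Real.Gamma (((lam:ℝ)+1)/2) ^ 2 ≤ Real.Gamma ((a:ℝ)+1) * Real.Gamma ((b:ℝ)+1) := this
      _ = ((a.factorial * b.factorial : ℕ) : ℝ) := by rw [hGa, hGb]; push_cast; ring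
  have hΓ2 : (0:ℝ) < Real.Gamma (((lam:ℝ)+1)/2) ^ 2 := by positivity
  have first : ((((lam - 1) / 2).factorial * (lam / 2).factorial : ℕ) : ℝ)⁻¹
      ≤ ((Real.Gamma (((lam : ℝ) + 1) / 2)) ^ 2)⁻¹ := by
    exact inv_anti₀ hΓ2 hpart1
  -- Part 2
  have hgl := gam_lower lam hlam
  have hll : (0:ℝ) < (lam:ℝ)^lam := by positivity
  have second : ((Real.Gamma (((lam : ℝ) + 1) / 2)) ^ 2)⁻¹
      ≤ (2 * Real.exp 1) ^ (lam - 1) / (lam : ℝ) ^ lam := by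
    rw [le_div_iff₀ hll, inv_mul_le_iff₀ hΓ2]
    exact hgl
  refine ⟨first, second, ?_⟩
  intro τ hτ
  have h13 := le_trans first second
  calc (1 / τ) ^ (lam - 1) * ((((lam - 1) / 2).factorial * (lam / 2).factorial : ℕ) : ℝ)⁻¹
      ≤ (1 / τ) ^ (lam - 1) * ((2 * Real.exp 1) ^ (lam - 1) / (lam : ℝ) ^ lam) := by
        apply mul_le_mul_of_nonneg_left h13 (by positivity)
    _ = (2 * Real.exp 1) ^ (lam - 1) * (1 / τ) ^ (lam - 1) / (lam : ℝ) ^ lam := by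
        ring
end

section
/- For m ≥ 1 and t ∈ (0,1), one has |d_m(s)| ≥ 1 − π²(m+1)²·w(s)²/6 for w(s) ≤ 1/(m+1), where d_m is the modified Dirichlet kernel and w the wrap-around distance. -/
open Real Matrix MeasureTheory

lemma my_sum_id (n : ℕ) : ∑ k ∈ Finset.range n, (k : ℝ) = (n : ℝ) * ((n : ℝ) - 1) / 2 := by
  induction n with
  | zero => simp
  | succ n ih => rw [Finset.sum_range_succ, ih]; push_cast; ring

lemma my_sum_sq (n : ℕ) :
    ∑ k ∈ Finset.range n, (k : ℝ) ^ 2 = (n : ℝ) * ((n : ℝ) - 1) * (2 * (n : ℝ) - 1) / 6 := by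
  induction n with
  | zero => simp
  | succ n ih => rw [Finset.sum_range_succ, ih]; push_cast; ring

lemma my_key_sum (m : ℕ) :
    ∑ k ∈ Finset.range (m + 1), (2 * (k : ℝ) - (m : ℝ)) ^ 2
      = (m : ℝ) * ((m : ℝ) + 1) * ((m : ℝ) + 2) / 3 := by
  have h : ∀ k ∈ Finset.range (m + 1),
      (2 * (k : ℝ) - (m : ℝ)) ^ 2 = 4 * (k : ℝ) ^ 2 - 4 * (m : ℝ) * (k : ℝ) + (m : ℝ) ^ 2 :=
    fun k _ => by ring
  rw [Finset.sum_congr rfl h, Finset.sum_add_distrib, Finset.sum_sub_distrib,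
    ← Finset.mul_sum, ← Finset.mul_sum, my_sum_sq, my_sum_id, Finset.sum_const,
    Finset.card_range]
  push_cast; ring

lemma dirich_lower (m : ℕ) (u : ℝ) :
    1 - π ^ 2 * ((m : ℝ) + 1) ^ 2 * u ^ 2 / 6 ≤ ‖dirich m u‖ := by
  have habs : ‖dirich m u‖
      = ‖Complex.exp (↑(-(π * m * u)) * Complex.I) * dirich m u‖ := by
    rw [norm_mul, Complex.norm_exp_ofReal_mul_I, one_mul]
  have hc : ((m : ℂ) + 1)⁻¹ = ((((m : ℝ) + 1)⁻¹ : ℝ) : ℂ) := by push_cast; ring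
  have hrw : Complex.exp (↑(-(π * m * u)) * Complex.I) * dirich m u
      = ((((m : ℝ) + 1)⁻¹ : ℝ) : ℂ) *
        ∑ k ∈ Finset.range (m + 1),
          Complex.exp (↑(π * (2 * (k : ℝ) - (m : ℝ)) * u) * Complex.I) := by
    rw [dirich, hc, mul_left_comm, Finset.mul_sum]
    congr 1
    refine Finset.sum_congr rfl fun k _ => ?_
    rw [← Complex.exp_add]
    congr 1
    push_cast
    ring
  have hre : (((((m : ℝ) + 1)⁻¹ : ℝ) : ℂ) *
      ∑ k ∈ Finset.range (m + 1),
        Complex.exp (↑(π * (2 * (k : ℝ) - (m : ℝ)) * u) * Complex.I)).re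
      = ((m : ℝ) + 1)⁻¹ *
        ∑ k ∈ Finset.range (m + 1), Real.cos (π * (2 * (k : ℝ) - (m : ℝ)) * u) := by
    rw [Complex.re_ofReal_mul, Complex.re_sum]
    congr 1
    exact Finset.sum_congr rfl fun k _ => Complex.exp_ofReal_mul_I_re _
  rw [habs, hrw]
  refine le_trans ?_ (le_trans (le_of_eq hre.symm) (Complex.re_le_norm _))
  have hcos : ∀ k ∈ Finset.range (m + 1),
      1 - (π * (2 * (k : ℝ) - (m : ℝ)) * u) ^ 2 / 2
        ≤ Real.cos (π * (2 * (k : ℝ) - (m : ℝ)) * u) :=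
    fun k _ => Real.one_sub_sq_div_two_le_cos
  have hsum : ((m : ℝ) + 1) - π ^ 2 * u ^ 2 / 2 * ((m : ℝ) * ((m : ℝ) + 1) * ((m : ℝ) + 2) / 3)
      ≤ ∑ k ∈ Finset.range (m + 1), Real.cos (π * (2 * (k : ℝ) - (m : ℝ)) * u) := by
    calc ((m : ℝ) + 1) - π ^ 2 * u ^ 2 / 2 * ((m : ℝ) * ((m : ℝ) + 1) * ((m : ℝ) + 2) / 3)
        = ∑ k ∈ Finset.range (m + 1),
            (1 - (π * (2 * (k : ℝ) - (m : ℝ)) * u) ^ 2 / 2) := by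
          rw [Finset.sum_sub_distrib, Finset.sum_const, Finset.card_range]
          have h2 : ∑ k ∈ Finset.range (m + 1), (π * (2 * (k : ℝ) - (m : ℝ)) * u) ^ 2 / 2
              = π ^ 2 * u ^ 2 / 2 *
                ∑ k ∈ Finset.range (m + 1), (2 * (k : ℝ) - (m : ℝ)) ^ 2 := by
            rw [Finset.mul_sum]
            exact Finset.sum_congr rfl fun k _ => by ring
          rw [h2, my_key_sum]
          push_cast; ring
      _ ≤ _ := Finset.sum_le_sum hcos
  have hmpos : (0 : ℝ) < (m : ℝ) + 1 := by positivity
  have h1 := mul_le_mul_of_nonneg_left hsum (inv_nonneg.mpr hmpos.le)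
  refine le_trans ?_ h1
  have h3 : ((m : ℝ) + 1)⁻¹ *
      (((m : ℝ) + 1) - π ^ 2 * u ^ 2 / 2 * ((m : ℝ) * ((m : ℝ) + 1) * ((m : ℝ) + 2) / 3))
      = 1 - π ^ 2 * ((m : ℝ) * ((m : ℝ) + 2)) * u ^ 2 / 6 := by
    field_simp; ring
  rw [h3]
  nlinarith [mul_nonneg (sq_nonneg π) (sq_nonneg u)]

lemma dirich_periodic (m : ℕ) (s : ℝ) : dirich m (s - 1) = dirich m s := by
  unfold dirich
  congr 1
  refine Finset.sum_congr rfl fun k _ => ?_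
  rw [Complex.ofReal_sub, Complex.ofReal_one]
  have h2 : Complex.exp (((-(k : ℤ) : ℤ) : ℂ) * (2 * π * Complex.I)) = 1 :=
    Complex.exp_int_mul_two_pi_mul_I _
  have h : (2 : ℂ) * π * Complex.I * k * ((s : ℂ) - 1)
      = 2 * π * Complex.I * k * s + ((-(k : ℤ) : ℤ) : ℂ) * (2 * π * Complex.I) := by
    push_cast; ring
  rw [h, Complex.exp_add, h2, mul_one]

theorem stmt16 (m : ℕ) (hm : 1 ≤ m) (s : ℝ) (hs : s ∈ Set.Ioo (0:ℝ) 1)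
    (hw : wrap s ≤ 1 / ((m : ℝ) + 1)) :
    ‖dirich m s‖ ≥ 1 - π ^ 2 * ((m : ℝ) + 1) ^ 2 * wrap s ^ 2 / 6 := by
  obtain ⟨hs0, hs1⟩ := hs
  have hbdd : BddBelow (Set.range fun r : ℤ => |s + (r : ℝ)|) :=
    ⟨0, fun x ⟨r, hr⟩ => hr ▸ abs_nonneg _⟩
  have hwrap : wrap s = min s (1 - s) := by
    apply le_antisymm
    · apply le_min
      · have h := ciInf_le hbdd (0 : ℤ)
        exact (by simpa [abs_of_pos hs0] using h : (⨅ r : ℤ, |s + (r : ℝ)|) ≤ s)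
      · have h := ciInf_le hbdd (-1 : ℤ)
        have h2 : |s + ((-1 : ℤ) : ℝ)| = 1 - s := by
          rw [abs_of_nonpos (by push_cast; linarith)]; push_cast; ring
        rw [h2] at h; exact h
    · apply le_ciInf
      intro r
      rcases le_or_gt 0 r with hr | hr
      · have hr' : (0 : ℝ) ≤ (r : ℝ) := by exact_mod_cast hr
        calc min s (1 - s) ≤ s := min_le_left _ _
          _ ≤ s + (r : ℝ) := by linarith
          _ ≤ |s + (r : ℝ)| := le_abs_self _
      · have hr' : (r : ℝ) ≤ -1 := by exact_mod_cast (by omega : r ≤ -1)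
        calc min s (1 - s) ≤ 1 - s := min_le_right _ _
          _ ≤ -(s + (r : ℝ)) := by linarith
          _ ≤ |s + (r : ℝ)| := neg_le_abs _
  rcases le_total s (1 - s) with h | h
  · rw [hwrap, min_eq_left h]
    exact dirich_lower m s
  · rw [hwrap, min_eq_right h, ← dirich_periodic m s]
    have h4 := dirich_lower m (s - 1)
    have hsq : (s - 1) ^ 2 = (1 - s) ^ 2 := by ring
    rw [hsq] at h4
    exact h4
end

section
/- Let Ω ⊂ [0,1)^d be a clustered node configuration with L clusters, largest cluster size λ, and normalized cluster separation ρ > 1 with respect to bandwidth N. Then for each node t_j ∈ Ω and each integer m ≥ 1, the number of nodes t' ∈ Ω with mρ ≤ N·w_∞(t_j − t') < (m+1)ρ is at most 2^d(2^d − 1)·m^{d−1}·λ, where w_∞ is the wrap-around max-norm distance. -/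
open Real Matrix MeasureTheory

lemma round_min (x : ℝ) (n : ℤ) : |x - round x| ≤ |x - n| := by
  by_cases h : n = round x
  · subst h; exact le_refl _
  · have h1 : (1:ℝ) ≤ |((round x : ℤ):ℝ) - (n:ℝ)| := by
      have hne : (round x : ℤ) - n ≠ 0 := sub_ne_zero.mpr (Ne.symm h)
      have := Int.one_le_abs hne
      calc (1:ℝ) = ((1:ℤ):ℝ) := by norm_num
        _ ≤ ((|round x - n| : ℤ) : ℝ) := by exact_mod_cast this
        _ = |((round x : ℤ):ℝ) - (n:ℝ)| := by push_cast; ring_nf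
    have h2 : |x - round x| ≤ 1/2 := abs_sub_round x
    have h3 : |((round x:ℤ):ℝ) - n| ≤ |(round x : ℝ) - x| + |x - n| := by
      calc |((round x:ℤ):ℝ) - n| = |((round x:ℝ) - x) + (x - n)| := by ring_nf
        _ ≤ _ := abs_add_le _ _
    rw [abs_sub_comm (round x : ℝ) x] at h3
    linarith

lemma wrap_eq (x : ℝ) : wrap x = |x - round x| := by
  unfold wrap
  apply le_antisymm
  · have hb : BddBelow (Set.range fun r : ℤ => |x + (r:ℝ)|) :=
      ⟨0, by rintro y ⟨r, rfl⟩; positivity⟩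
    have := ciInf_le hb (-round x)
    simpa [sub_eq_add_neg] using this
  · apply le_ciInf
    intro r
    have := round_min x (-r)
    simpa [sub_eq_add_neg] using this

lemma wrap_le_abs (x : ℝ) : wrap x ≤ |x| := by
  rw [wrap_eq]
  simpa using round_min x 0

lemma sup_attained {d : ℕ} (hd : 0 < d) (f : Fin d → ℝ) :
    ∃ ℓ, (⨆ i, f i) = f ℓ ∧ ∀ i, f i ≤ f ℓ := by
  have : Nonempty (Fin d) := ⟨⟨0, hd⟩⟩
  obtain ⟨ℓ, hℓ⟩ := Finite.exists_max f
  exact ⟨ℓ, le_antisymm (ciSup_le hℓ) (le_ciSup (Set.finite_range f).bddAbove ℓ), hℓ⟩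

noncomputable def cellIdx (x : ℝ) : ℤ := if 0 ≤ x then ⌊x⌋ else -1 - ⌊-x⌋

lemma cellIdx_close {x y : ℝ} (h : cellIdx x = cellIdx y) : |x - y| < 1 := by
  unfold cellIdx at h
  by_cases hx : 0 ≤ x <;> by_cases hy : 0 ≤ y <;> simp [hx, hy] at h
  · have h1 := Int.floor_le x
    have h2 := Int.lt_floor_add_one x
    have h3 := Int.floor_le y
    have h4 := Int.lt_floor_add_one y
    rw [h] at h1 h2
    rw [abs_sub_lt_iff]; constructor <;> linarith
  · exfalso
    have : (0:ℤ) ≤ ⌊x⌋ := Int.floor_nonneg.mpr hx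
    have : (0:ℤ) ≤ ⌊-y⌋ := Int.floor_nonneg.mpr (by linarith [not_le.mp hy])
    omega
  · exfalso
    have : (0:ℤ) ≤ ⌊y⌋ := Int.floor_nonneg.mpr hy
    have : (0:ℤ) ≤ ⌊-x⌋ := Int.floor_nonneg.mpr (by linarith [not_le.mp hx])
    omega
  · have h' : ⌊-x⌋ = ⌊-y⌋ := by omega
    have h1 := Int.floor_le (-x)
    have h2 := Int.lt_floor_add_one (-x)
    have h3 := Int.floor_le (-y)
    have h4 := Int.lt_floor_add_one (-y)
    rw [h'] at h1 h2
    rw [abs_sub_lt_iff]; constructor <;> linarith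

lemma cellIdx_mem {x : ℝ} {m : ℕ} (h : |x| < (m:ℝ) + 1) :
    cellIdx x ∈ Finset.Icc (-((m:ℤ)+1)) (m:ℤ) := by
  unfold cellIdx
  rw [Finset.mem_Icc]
  by_cases hx : 0 ≤ x <;> simp [hx]
  · constructor
    · have : (0:ℤ) ≤ ⌊x⌋ := Int.floor_nonneg.mpr hx
      omega
    · have : ⌊x⌋ < (m:ℤ) + 1 := Int.floor_lt.mpr (by rw [abs_of_nonneg hx] at h; push_cast; linarith)
      omega
  · have hx' : 0 < -x := by linarith [not_le.mp hx]
    have h1 : (0:ℤ) ≤ ⌊-x⌋ := Int.floor_nonneg.mpr (le_of_lt hx')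
    have h2 : ⌊-x⌋ < (m:ℤ) + 1 := Int.floor_lt.mpr (by rw [abs_of_neg (not_le.mp hx)] at h; push_cast; linarith)
    omega

lemma cellIdx_shell {x : ℝ} {m : ℕ} (h : (m:ℝ) ≤ |x|) :
    cellIdx x ∉ Finset.Icc (-(m:ℤ)) ((m:ℤ)-1) := by
  unfold cellIdx
  rw [Finset.mem_Icc]
  by_cases hx : 0 ≤ x
  · rw [if_pos hx]
    have : (m:ℤ) ≤ ⌊x⌋ := Int.le_floor.mpr (by rw [abs_of_nonneg hx] at h; push_cast; linarith)
    omega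
  · rw [if_neg hx]
    have : (m:ℤ) ≤ ⌊-x⌋ := Int.le_floor.mpr (by rw [abs_of_neg (not_le.mp hx)] at h; push_cast; linarith)
    omega

lemma key_pow (m : ℕ) (hm : 1 ≤ m) : ∀ d, 0 < d → (m+1)^d ≤ m^d + (2^d-1)*m^(d-1) := by
  intro d
  induction d with
  | zero => omega
  | succ d ih =>
    intro _
    simp only [Nat.add_sub_cancel]
    rcases Nat.eq_zero_or_pos d with hd0 | hd0
    · subst hd0; norm_num
    · have IH := ih hd0
      have hpow : m^(d-1) ≤ m^d := Nat.pow_le_pow_right hm (by omega)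
      have hpm : m^(d-1)*m = m^d := by
        rw [← pow_succ]; congr 1; omega
      have h2 : (1:ℕ) ≤ 2^d := Nat.one_le_two_pow
      calc (m+1)^(d+1) = (m+1)^d * (m+1) := by ring
        _ ≤ (m^d + (2^d-1)*m^(d-1)) * (m+1) := Nat.mul_le_mul_right _ IH
        _ = m^d*m + m^d + (2^d-1)*(m^(d-1)*m) + (2^d-1)*m^(d-1) := by ring
        _ ≤ m^d*m + m^d + (2^d-1)*m^d + (2^d-1)*m^d := by
            rw [hpm]
            have := Nat.mul_le_mul_left (2^d-1) hpow
            omega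
        _ = m^(d+1) + (1 + (2^d-1) + (2^d-1))*m^d := by ring
        _ ≤ m^(d+1) + (2^(d+1)-1)*m^d := by
            apply Nat.add_le_add_left
            apply Nat.mul_le_mul_right
            have : 2^(d+1) = 2*2^d := by ring
            omega

theorem stmt18 (d N L M lam : ℕ) (hd : 0 < d) (hN : 0 < N) (ρ : ℝ) (hρ : 1 < ρ)
    (t : Fin M → Fin d → ℝ) (ht : ∀ j ℓ, t j ℓ ∈ Set.Ico (0:ℝ) 1)
    (cl : Fin M → Fin L)
    (hsize : ∀ j k, cl j = cl k → ∀ ℓ, wrap (t j ℓ - t k ℓ) ≤ 1 / N)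
    (hsep : ∀ j k, cl j ≠ cl k → ρ / N ≤ ⨆ ℓ, wrap (t j ℓ - t k ℓ))
    (hlam : ∀ l : Fin L, {j : Fin M | cl j = l}.ncard ≤ lam)
    (j : Fin M) (m : ℕ) (hm : 1 ≤ m) :
    {k : Fin M | (m : ℝ) * ρ ≤ (N : ℝ) * ⨆ ℓ, wrap (t j ℓ - t k ℓ) ∧
        (N : ℝ) * (⨆ ℓ, wrap (t j ℓ - t k ℓ)) < ((m : ℝ) + 1) * ρ}.ncard
      ≤ 2 ^ d * (2 ^ d - 1) * m ^ (d - 1) * lam := by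
  classical
  have hNpos : (0:ℝ) < N := by exact_mod_cast hN
  have hρpos : (0:ℝ) < ρ := lt_trans one_pos hρ
  -- the deviation from the nearest integer
  set δ : Fin M → Fin d → ℝ := fun k ℓ => t j ℓ - t k ℓ - round (t j ℓ - t k ℓ) with hδ
  have hwrap : ∀ k ℓ, wrap (t j ℓ - t k ℓ) = |δ k ℓ| := fun k ℓ => wrap_eq _
  set V : Fin M → Fin d → ℤ := fun k ℓ => cellIdx (δ k ℓ * N / ρ) with hV
  set S : Finset (Fin M) := Finset.univ.filter
    (fun k => (m : ℝ) * ρ ≤ (N : ℝ) * ⨆ ℓ, wrap (t j ℓ - t k ℓ) ∧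
      (N : ℝ) * (⨆ ℓ, wrap (t j ℓ - t k ℓ)) < ((m : ℝ) + 1) * ρ) with hSdef
  have hset : {k : Fin M | (m : ℝ) * ρ ≤ (N : ℝ) * ⨆ ℓ, wrap (t j ℓ - t k ℓ) ∧
        (N : ℝ) * (⨆ ℓ, wrap (t j ℓ - t k ℓ)) < ((m : ℝ) + 1) * ρ} = ↑S := by
    ext k; simp [hSdef]
  rw [hset, Set.ncard_coe_finset]
  -- V determines the cluster
  have hVcl : ∀ k k', V k = V k' → cl k = cl k' := by
    intro k k' hVeq
    by_contra hne
    obtain ⟨ℓ, hsup, -⟩ := sup_attained hd (fun ℓ => wrap (t k ℓ - t k' ℓ))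
    have h1 : ρ / N ≤ wrap (t k ℓ - t k' ℓ) := hsup ▸ hsep k k' hne
    have hrw : t k ℓ - t k' ℓ =
        (δ k' ℓ - δ k ℓ) + ((round (t j ℓ - t k' ℓ) - round (t j ℓ - t k ℓ) : ℤ) : ℝ) := by
      simp only [hδ]; push_cast; ring
    have h2 : wrap (t k ℓ - t k' ℓ) ≤ |δ k' ℓ - δ k ℓ| := by
      rw [hrw, wrap_add_int]; exact wrap_le_abs _
    have h3 : |δ k ℓ * N / ρ - δ k' ℓ * N / ρ| < 1 :=
      cellIdx_close (by rw [show cellIdx (δ k ℓ * N / ρ) = V k ℓ from rfl,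
        show cellIdx (δ k' ℓ * N / ρ) = V k' ℓ from rfl, hVeq])
    have h4 : |δ k ℓ - δ k' ℓ| * (N / ρ) < 1 := by
      have he : δ k ℓ * N / ρ - δ k' ℓ * N / ρ = (δ k ℓ - δ k' ℓ) * (N / ρ) := by ring
      rw [he, abs_mul, abs_of_pos (show (0:ℝ) < (N:ℝ)/ρ by positivity)] at h3
      exact h3
    have h5 : |δ k ℓ - δ k' ℓ| < ρ / N := by
      rw [← lt_div_iff₀ (by positivity)] at h4
      simpa [one_div, div_div_eq_mul_div, one_mul] using h4
    rw [abs_sub_comm] at h5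
    linarith
  -- fibers of V on S have size ≤ lam
  have hfiber : ∀ v ∈ S.image V, (S.filter (fun k => V k = v)).card ≤ lam := by
    intro v hv
    obtain ⟨k₀, hk₀S, hk₀⟩ := Finset.mem_image.mp hv
    have hsub : S.filter (fun k => V k = v) ⊆ Finset.univ.filter (fun k => cl k = cl k₀) := by
      intro k hk
      rw [Finset.mem_filter] at hk ⊢
      exact ⟨Finset.mem_univ _, hVcl k k₀ (hk.2.trans hk₀.symm)⟩
    calc (S.filter (fun k => V k = v)).card ≤ (Finset.univ.filter (fun k => cl k = cl k₀)).card :=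
          Finset.card_le_card hsub
      _ ≤ lam := by
          have := hlam (cl k₀)
          rwa [show {x : Fin M | cl x = cl k₀} = ↑(Finset.univ.filter (fun k => cl k = cl k₀)) by
            ext x; simp, Set.ncard_coe_finset] at this
  -- the image lies in the shell
  set outer : Finset (Fin d → ℤ) := Fintype.piFinset (fun _ => Finset.Icc (-((m:ℤ)+1)) (m:ℤ))
    with houter
  set inner : Finset (Fin d → ℤ) := Fintype.piFinset (fun _ => Finset.Icc (-(m:ℤ)) ((m:ℤ)-1))
    with hinner
  have himg : S.image V ⊆ outer \ inner := by
    intro v hv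
    obtain ⟨k, hkS, hk⟩ := Finset.mem_image.mp hv
    rw [hSdef, Finset.mem_filter] at hkS
    obtain ⟨-, hk1, hk2⟩ := hkS
    obtain ⟨ℓ₀, hsup, hmax⟩ := sup_attained hd (fun ℓ => wrap (t j ℓ - t k ℓ))
    have habs : ∀ ℓ, |δ k ℓ * N / ρ| = |δ k ℓ| * N / ρ := by
      intro ℓ
      rw [abs_div, abs_mul, abs_of_pos hNpos, abs_of_pos hρpos]
    rw [Finset.mem_sdiff]
    constructor
    · rw [houter, Fintype.mem_piFinset]
      intro ℓ
      have hle : wrap (t j ℓ - t k ℓ) ≤ ⨆ ℓ', wrap (t j ℓ' - t k ℓ') := hsup ▸ hmax ℓ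
      have : (N:ℝ) * |δ k ℓ| < ((m:ℝ)+1) * ρ := by
        rw [← hwrap]; nlinarith
      have hlt : |δ k ℓ * N / ρ| < (m:ℝ) + 1 := by
        rw [habs, div_lt_iff₀ hρpos]; nlinarith
      rw [← hk]; exact cellIdx_mem hlt
    · rw [hinner, Fintype.mem_piFinset]
      push_neg
      refine ⟨ℓ₀, ?_⟩
      have : (m:ℝ) * ρ ≤ (N:ℝ) * |δ k ℓ₀| := by
        rw [← hwrap]; rw [hsup] at hk1; exact hk1
      have hge : (m:ℝ) ≤ |δ k ℓ₀ * N / ρ| := by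
        rw [habs, le_div_iff₀ hρpos]; nlinarith
      rw [← hk]; exact cellIdx_shell hge
  -- counting
  have houtercard : outer.card = (2*m+2)^d := by
    rw [houter, Fintype.card_piFinset]
    have : (Finset.Icc (-((m:ℤ)+1)) (m:ℤ)).card = 2*m+2 := by
      rw [Int.card_Icc]; omega
    simp only [this, Finset.prod_const, Finset.card_univ, Fintype.card_fin]
  have hinnercard : inner.card = (2*m)^d := by
    rw [hinner, Fintype.card_piFinset]
    have : (Finset.Icc (-(m:ℤ)) ((m:ℤ)-1)).card = 2*m := by
      rw [Int.card_Icc]; omega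
    simp only [this, Finset.prod_const, Finset.card_univ, Fintype.card_fin]
  have hsub' : inner ⊆ outer := by
    rw [houter, hinner]
    intro v hv
    rw [Fintype.mem_piFinset] at hv ⊢
    intro ℓ
    have := hv ℓ
    rw [Finset.mem_Icc] at this ⊢
    omega
  have hshellcard : (outer \ inner).card ≤ 2^d * (2^d-1) * m^(d-1) := by
    rw [Finset.card_sdiff_of_subset hsub', houtercard, hinnercard]
    have h1 : (2*m+2)^d = 2^d * (m+1)^d := by rw [← mul_pow]; ring_nf
    have h2 : (2*m)^d = 2^d * m^d := by rw [← mul_pow]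
    have h3 := key_pow m hm d hd
    have h4 : (2*m+2)^d ≤ 2^d * m^d + 2^d * ((2^d-1) * m^(d-1)) := by
      rw [h1]
      calc 2^d * (m+1)^d ≤ 2^d * (m^d + (2^d-1)*m^(d-1)) := Nat.mul_le_mul_left _ h3
        _ = 2^d * m^d + 2^d * ((2^d-1) * m^(d-1)) := by ring
    have h5 : 2^d * ((2^d-1) * m^(d-1)) = 2^d * (2^d-1) * m^(d-1) := by ring
    omega
  calc S.card ≤ lam * (S.image V).card := Finset.card_le_mul_card_image S lam hfiber
    _ ≤ lam * (outer \ inner).card := Nat.mul_le_mul_left _ (Finset.card_le_card himg)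
    _ ≤ lam * (2^d * (2^d-1) * m^(d-1)) := Nat.mul_le_mul_left _ hshellcard
    _ = 2 ^ d * (2 ^ d - 1) * m ^ (d - 1) * lam := by ring
end
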